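/- arXiv:1009.2085 — 3 statements merged into one kernel-verified Lean document; each statement's English description precedes it below -/
import Mathlib

section
/- Let V_π be a Poisson spray on the Poisson manifold (M, π) with flow φ_t. Under the canonical identification T_{0_x}(T*M) ≅ T_x M ⊕ T*_x M, v ↦ (v̄, θ_v), the differential of the flow at a zero covector 0_x is (dφ_t)_{0_x} : (v̄, θ_v) ↦ (v̄ + t π♯(θ_v), θ_v). -/
/-!
Formalization framework for "On the existence of symplectic realizations"
(Crainic–Mărcuț).  We work on a chart: the Poisson manifold is an open set
`U ⊆ ℝⁿ` (with `Vec n := Fin n → ℝ`), its cotangent bundle is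
`T*U = U × ℝⁿ ⊆ Pt n := Vec n × Vec n`, with bundle projection `Prod.fst`.
A bivector field is given by its components `Pb x p q = π_{pq}(x)`, a classical
connection on `TM` by its Christoffel symbols `Γ x p q r = Γ_{pq}^r(x)`.
-/

noncomputable section
open Set

namespace PoissonPaper

abbrev Vec (n : ℕ) := Fin n → ℝ
abbrev Pt (n : ℕ) := Vec n × Vec n

variable {n : ℕ}

/-- Partial derivative `∂_l f (x)`. -/
def pd (l : Fin n) (f : Vec n → ℝ) (x : Vec n) : ℝ :=
  fderiv ℝ f x (Pi.single l 1)

/-- The bundle map `π♯ : T*M → TM`, `β(π♯ α) = π(α, β)`;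
in components `(π♯ ξ)_q = ∑_p π_{pq} ξ_p`. -/
def sharp (Pb : Vec n → Fin n → Fin n → ℝ) (x ξ : Vec n) : Vec n :=
  fun q => ∑ p, Pb x p q * ξ p

/-- The Jacobiator of the bivector `Pb` on the coordinate functions:
`{{x_j,x_k},x_i} + {{x_k,x_i},x_j} + {{x_i,x_j},x_k}`; `π` is Poisson iff it
vanishes. -/
def jacobiator (Pb : Vec n → Fin n → Fin n → ℝ) (x : Vec n) (i j k : Fin n) : ℝ :=
  ∑ l, (Pb x l i * pd l (fun y => Pb y j k) x
      + Pb x l j * pd l (fun y => Pb y k i) x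
      + Pb x l k * pd l (fun y => Pb y i j) x)

/-- Components of the Schouten bracket `[π, π]` (with the convention
`[π,π](df,dg,dh) = 2({f,{g,h}} + {g,{h,f}} + {h,{f,g}})`). -/
def schouten (Pb : Vec n → Fin n → Fin n → ℝ) (x : Vec n) (i j k : Fin n) : ℝ :=
  -(2 * jacobiator Pb x i j k)

/-- `Pb` is a smooth bivector field (an antisymmetric 2-tensor) on `U`. -/
def IsBivectorOn (U : Set (Vec n)) (Pb : Vec n → Fin n → Fin n → ℝ) : Prop :=
  (∀ p q, ContDiffOn ℝ (⊤ : ℕ∞) (fun x => Pb x p q) U) ∧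
  (∀ x ∈ U, ∀ p q, Pb x q p = - Pb x p q)

/-- `Pb` is a Poisson bivector on `U` : a bivector with `[π,π] = 0`
(the Jacobi identity). -/
def IsPoissonOn (U : Set (Vec n)) (Pb : Vec n → Fin n → Fin n → ℝ) : Prop :=
  IsBivectorOn U Pb ∧ ∀ x ∈ U, ∀ i j k, jacobiator Pb x i j k = 0

/-- A Poisson spray for `(U, π)`: a (smooth) vector field `V` on `T*U = U × ℝⁿ`
such that `(dp)_ξ(V_ξ) = π♯(ξ)` and `m_t^*(V) = t V` for all `t > 0`
(the latter written as `(dm_t)(t • V_ξ) = V(m_t ξ)`, where `m_t(x,y) = (x,t•y)`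
and `dm_t(v,θ) = (v, t•θ)`). -/
structure IsSpray (U : Set (Vec n)) (Pb : Vec n → Fin n → Fin n → ℝ)
    (V : Pt n → Pt n) : Prop where
  smooth : ContDiffOn ℝ (⊤ : ℕ∞) V (U ×ˢ (univ : Set (Vec n)))
  base : ∀ ξ : Pt n, ξ.1 ∈ U → (V ξ).1 = sharp Pb ξ.1 ξ.2
  homog : ∀ t : ℝ, 0 < t → ∀ ξ : Pt n, ξ.1 ∈ U →
    V (ξ.1, t • ξ.2) = (t • (V ξ).1, t • t • (V ξ).2)

/-- A local flow `φ` of the vector field `V` on `T*U = U × ℝⁿ ⊆ Pt n`, with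
open domain `D ⊆ ℝ × Pt n`. -/
structure IsLocalFlow (U : Set (Vec n)) (V : Pt n → Pt n)
    (D : Set (ℝ × Pt n)) (φ : ℝ → Pt n → Pt n) : Prop where
  isOpen_dom : IsOpen D
  mem_zero : ∀ ξ : Pt n, ξ.1 ∈ U → ((0 : ℝ), ξ) ∈ D
  init : ∀ ξ : Pt n, φ 0 ξ = ξ
  interval : ∀ (t : ℝ) (ξ : Pt n), (t, ξ) ∈ D → ∀ s ∈ uIcc (0:ℝ) t, (s, ξ) ∈ D
  invariant : ∀ (t : ℝ) (ξ : Pt n), (t, ξ) ∈ D → (φ t ξ).1 ∈ U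
  hasDeriv : ∀ (t : ℝ) (ξ : Pt n), (t, ξ) ∈ D →
    HasDerivAt (fun s => φ s ξ) (V (φ t ξ)) t
  group : ∀ (s t : ℝ) (ξ : Pt n), (t, ξ) ∈ D → (s, φ t ξ) ∈ D →
    (s + t, ξ) ∈ D ∧ φ s (φ t ξ) = φ (s + t) ξ

/-- The canonical symplectic form `ω_can = ∑ dx_i ∧ dy_i` of `T*ℝⁿ = ℝⁿ × ℝⁿ`
(constant coefficients): `ω_can(v, w) = ⟨θ_w, v̄⟩ - ⟨θ_v, w̄⟩`. -/
def omegaCan (v w : Pt n) : ℝ := ∑ i, (w.2 i * v.1 i - v.2 i * w.1 i)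

/-- The 2-form `ω := ∫₀¹ (φ_t)^* ω_can dt`. -/
def omegaInt (φ : ℝ → Pt n → Pt n) (ξ v w : Pt n) : ℝ :=
  ∫ t in (0:ℝ)..1, omegaCan (fderiv ℝ (φ t) ξ v) (fderiv ℝ (φ t) ξ w)

/-- Nondegeneracy of a 2-form at a point. -/
def Nondeg (ω : Pt n → Pt n → Pt n → ℝ) (ξ : Pt n) : Prop :=
  ∀ v : Pt n, (∀ w : Pt n, ω ξ v w = 0) → v = 0

/-- Closedness of a 2-form on `S` (`dω = 0`, expressed on constant vector
fields). -/
def ClosedOn (S : Set (Pt n)) (ω : Pt n → Pt n → Pt n → ℝ) : Prop :=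
  ∀ ξ ∈ S, ∀ u v w : Pt n,
    fderiv ℝ (fun η => ω η v w) ξ u - fderiv ℝ (fun η => ω η u w) ξ v
      + fderiv ℝ (fun η => ω η u v) ξ w = 0

/-- `ω` is a symplectic form on `S`: a smooth, bilinear, antisymmetric,
closed, nondegenerate 2-form. -/
def IsSymplecticOn (S : Set (Pt n)) (ω : Pt n → Pt n → Pt n → ℝ) : Prop :=
  (∀ ξ ∈ S, ∀ v w : Pt n, ω ξ w v = - ω ξ v w) ∧
  (∀ ξ ∈ S, ∀ (a b : ℝ) (v v' w : Pt n),
      ω ξ (a • v + b • v') w = a * ω ξ v w + b * ω ξ v' w) ∧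
  (∀ v w : Pt n, ContDiffOn ℝ (⊤ : ℕ∞) (fun ξ => ω ξ v w) S) ∧
  ClosedOn S ω ∧ (∀ ξ ∈ S, Nondeg ω ξ)

/-- The projection `p = Prod.fst : (S, ω) → (U, π)` is a Poisson map: for each
`ξ ∈ S` and `θ ∈ T*_{p(ξ)}M`, any `v` with `i_v ω = p^*θ` at `ξ` satisfies
`(dp)_ξ(v) = π♯(θ)`; i.e. the bivector inverse to `ω` pushes forward to `π`. -/
def FstIsPoissonMap (S : Set (Pt n)) (Pb : Vec n → Fin n → Fin n → ℝ)
    (ω : Pt n → Pt n → Pt n → ℝ) : Prop :=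
  ∀ ξ ∈ S, ∀ θ : Vec n, ∀ v : Pt n,
    (∀ w : Pt n, ω ξ v w = ∑ i, θ i * w.1 i) → v.1 = sharp Pb ξ.1 θ

/-- Lie bracket of vector fields on `ℝⁿ` (in components). -/
def lieVF (X Y : Vec n → Vec n) (x : Vec n) : Vec n :=
  fun q => ∑ p, (X x p * pd p (fun y => Y y q) x - Y x p * pd p (fun y => X y q) x)

/-- Lie derivative of a 1-form `β` along a vector field `X` (in components):
`(L_X β)_r = ∑_p (X_p ∂_p β_r + β_p ∂_r X_p)`. -/
def lieDer1 (X β : Vec n → Vec n) (x : Vec n) : Vec n :=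
  fun r => ∑ p, (X x p * pd p (fun y => β y r) x + β x p * pd r (fun y => X y p) x)

/-- The pairing `π(α, β)`. -/
def pbPair (Pb : Vec n → Fin n → Fin n → ℝ) (α β : Vec n → Vec n) (x : Vec n) : ℝ :=
  ∑ p, ∑ q, Pb x p q * α x p * β x q

/-- The Koszul bracket `[α, β]_π = L_{π♯α} β − L_{π♯β} α − d(π(α,β))` on
1-forms. -/
def koszul (Pb : Vec n → Fin n → Fin n → ℝ) (α β : Vec n → Vec n) (x : Vec n) :
    Vec n :=
  fun r => lieDer1 (fun y => sharp Pb y (α y)) β x r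
         - lieDer1 (fun y => sharp Pb y (β y)) α x r
         - pd r (pbPair Pb α β) x

/-- The Lie derivative `L_{π♯α}(f)` of a function along `π♯α`. -/
def LDer (Pb : Vec n → Fin n → Fin n → ℝ) (α : Vec n → Vec n) (f : Vec n → ℝ)
    (x : Vec n) : ℝ :=
  ∑ q, sharp Pb x (α x) q * pd q f x

/-- Classical covariant derivative of a 1-form `α` along a vector field `X`,
for the connection dual to the one on `TM` with Christoffel symbols `Γ`:
`(∇_X α)_q = ∑_p X_p ∂_p α_q − ∑_{p,r} Γ_{pq}^r X_p α_r`. -/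
def covD1 (Γ : Vec n → Fin n → Fin n → Fin n → ℝ) (X α : Vec n → Vec n)
    (x : Vec n) : Vec n :=
  fun q => (∑ p, X x p * pd p (fun y => α y q) x)
         - ∑ p, ∑ r, Γ x p q r * X x p * α x r

/-- The contravariant connection `∇̄` on `TM` induced by a classical connection:
`∇̄_α(V) = π♯(∇_V α) + [π♯α, V]`. -/
def nbarVF (Pb : Vec n → Fin n → Fin n → ℝ)
    (Γ : Vec n → Fin n → Fin n → Fin n → ℝ)
    (α X : Vec n → Vec n) (x : Vec n) : Vec n :=
  fun s => (∑ q, Pb x q s * covD1 Γ X α x q)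
         + lieVF (fun y => sharp Pb y (α y)) X x s

/-- The contravariant connection `∇̄` on `T*M` induced by a classical
connection: `∇̄_α(β) = ∇_{π♯β}(α) + [α, β]_π`. -/
def nbar1F (Pb : Vec n → Fin n → Fin n → ℝ)
    (Γ : Vec n → Fin n → Fin n → Fin n → ℝ)
    (α β : Vec n → Vec n) (x : Vec n) : Vec n :=
  fun r => covD1 Γ (fun y => sharp Pb y (β y)) α x r + koszul Pb α β x r

/-- Connection coefficients of `∇̄` on `TM`: `(∇̄_{dx_p} ∂_q)^r`. -/
def GbarTM (Pb : Vec n → Fin n → Fin n → ℝ)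
    (Γ : Vec n → Fin n → Fin n → Fin n → ℝ) (x : Vec n) (p q r : Fin n) : ℝ :=
  -(∑ s, Pb x s r * Γ x q s p) - pd q (fun y => Pb y p r) x

/-- Connection coefficients of `∇̄` on `T*M`: `(∇̄_{dx_p} dx_q)_r`. -/
def GbarT1 (Pb : Vec n → Fin n → Fin n → ℝ)
    (Γ : Vec n → Fin n → Fin n → Fin n → ℝ) (x : Vec n) (p q r : Fin n) : ℝ :=
  pd r (fun y => Pb y p q) x - ∑ s, Pb x q s * Γ x s r p

/-- Connection coefficients of the contravariant connection `∇_α := ∇_{π♯α}`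
on `T*M`: `(∇_{π♯ dx_p} dx_q)_r`. -/
def Gplain (Pb : Vec n → Fin n → Fin n → ℝ)
    (Γ : Vec n → Fin n → Fin n → Fin n → ℝ) (x : Vec n) (p q r : Fin n) : ℝ :=
  -(∑ s, Pb x p s * Γ x s r q)

/-- Derivative of a path `u` (of tangent or cotangent vectors) along a
cotangent path with covector components `a` over base path `γ`, for a
contravariant connection with coefficients `G` (so `(∇_a u)_r = u̇_r +
∑_{p,q} a_p u_q G_{pq}^r`). -/
def covAlong (G : Vec n → Fin n → Fin n → Fin n → ℝ) (a γ : ℝ → Vec n)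
    (u : ℝ → Vec n) (t : ℝ) : Vec n :=
  fun r => deriv (fun s => u s r) t + ∑ p, ∑ q, a t p * u t q * G (γ t) p q r

/-- Vertical component `θ_v = v − hor_ξ(v̄)` of a tangent vector
`v ∈ T_ξ(T*M)` with respect to the classical connection `Γ`. -/
def vert (Γ : Vec n → Fin n → Fin n → Fin n → ℝ) (ξ v : Pt n) : Vec n :=
  fun q => v.2 q - ∑ p, ∑ r, Γ ξ.1 p q r * v.1 p * ξ.2 r

/-- The horizontal subspace `H_ξ ⊆ T_ξ(T*M)` of the classical connection `Γ`. -/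
def Hor (Γ : Vec n → Fin n → Fin n → Fin n → ℝ) (ξ : Pt n) : Set (Pt n) :=
  {u : Pt n | ∀ q, u.2 q = ∑ p, ∑ r, Γ ξ.1 p q r * u.1 p * ξ.2 r}

/-- A contravariant connection on `T*M` over the Poisson manifold `(U, π)`:
a bilinear operation `(α, β) ↦ ∇_α β` on 1-forms, function-linear in `α` and
satisfying the Leibniz rule `∇_α(fβ) = f ∇_α β + L_{π♯α}(f) β`. -/
structure IsContraConn (U : Set (Vec n)) (Pb : Vec n → Fin n → Fin n → ℝ)
    (C : (Vec n → Vec n) → (Vec n → Vec n) → (Vec n → Vec n)) : Prop where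
  addLeft : ∀ (α α' β : Vec n → Vec n), ∀ x ∈ U,
    C (α + α') β x = C α β x + C α' β x
  addRight : ∀ (α β β' : Vec n → Vec n), ∀ x ∈ U,
    C α (β + β') x = C α β x + C α β' x
  smulLeft : ∀ f : Vec n → ℝ, ContDiffOn ℝ (⊤ : ℕ∞) f U →
    ∀ (α β : Vec n → Vec n), ∀ x ∈ U,
      C (fun y => f y • α y) β x = f x • C α β x
  leibniz : ∀ f : Vec n → ℝ, ContDiffOn ℝ (⊤ : ℕ∞) f U →
    ∀ (α β : Vec n → Vec n), ∀ x ∈ U,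
      C α (fun y => f y • β y) x = f x • C α β x + LDer Pb α f x • β x

/-- Christoffel symbols of a contravariant connection:
`∇_{dx_p}(dx_q) = ∑_r Γ_{pq}^r dx_r`. -/
def christ (C : (Vec n → Vec n) → (Vec n → Vec n) → (Vec n → Vec n))
    (x : Vec n) (p q r : Fin n) : ℝ :=
  C (fun _ => Pi.single p 1) (fun _ => Pi.single q 1) x r

/-- A smooth 1-form on `U` (in components). -/
def Smooth1F (U : Set (Vec n)) (α : Vec n → Vec n) : Prop :=
  ∀ q, ContDiffOn ℝ (⊤ : ℕ∞) (fun x => α x q) U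

/-- The pairing `g(α, β)` of a fiber metric on `T*M` with 1-forms. -/
def gPair (g : Vec n → Fin n → Fin n → ℝ) (α β : Vec n → Vec n) (x : Vec n) : ℝ :=
  ∑ p, ∑ q, g x p q * α x p * β x q

/-! ### Auxiliary lemmas for `flow_differential_at_zero_section` -/

section FlowDifferentialAux

open Metric

/-- Continuous induction on `[0,1]`: if being in the closed set `A` up to time `u`
forces being in `B` up to time `u`, and `B` has an `ε`-collar inside `A`, then the
curve stays in `A` on all of `[0,1]`. -/
lemma reach {E : Type*} [NormedAddCommGroup E] (c : ℝ → E)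
    (hc : ∀ u ∈ Icc (0:ℝ) 1, ContinuousAt c u) (A B : Set E) (hA : IsClosed A)
    {ε : ℝ} (hε : 0 < ε) (hBA : ∀ a ∈ B, ∀ p : E, ‖p - a‖ ≤ ε → p ∈ A)
    (h0 : c 0 ∈ A)
    (step : ∀ u ∈ Icc (0:ℝ) 1, (∀ r ∈ Icc (0:ℝ) u, c r ∈ A) → ∀ r ∈ Icc (0:ℝ) u, c r ∈ B) :
    ∀ r ∈ Icc (0:ℝ) 1, c r ∈ A := by
  set S : Set ℝ := {u ∈ Icc (0:ℝ) 1 | ∀ r ∈ Icc (0:ℝ) u, c r ∈ A} with hS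
  have h0S : (0:ℝ) ∈ S := by
    refine ⟨by simp, fun r hr => ?_⟩
    have : r = 0 := le_antisymm hr.2 hr.1
    simpa [this] using h0
  have hSne : S.Nonempty := ⟨0, h0S⟩
  have hSbdd : BddAbove S := ⟨1, fun u hu => hu.1.2⟩
  set u₀ : ℝ := sSup S with hu₀def
  have hu₀0 : 0 ≤ u₀ := le_csSup hSbdd h0S
  have hu₀1 : u₀ ≤ 1 := csSup_le hSne fun u hu => hu.1.2
  have hu₀Icc : u₀ ∈ Icc (0:ℝ) 1 := ⟨hu₀0, hu₀1⟩
  have hlt : ∀ r, 0 ≤ r → r < u₀ → c r ∈ A := by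
    intro r hr0 hr
    obtain ⟨u, huS, hru⟩ := exists_lt_of_lt_csSup hSne hr
    exact huS.2 r ⟨hr0, le_of_lt hru⟩
  have hu₀S : u₀ ∈ S := by
    refine ⟨hu₀Icc, fun r hr => ?_⟩
    rcases lt_or_eq_of_le hr.2 with h | h
    · exact hlt r hr.1 h
    · subst h
      rcases eq_or_lt_of_le hu₀0 with h0' | h0'
      · simpa [← h0'] using h0
      · have hne : (nhdsWithin u₀ (Ioo (0:ℝ) u₀)).NeBot := by
          rw [← mem_closure_iff_nhdsWithin_neBot, closure_Ioo (ne_of_lt h0')]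
          exact ⟨le_of_lt h0', le_refl _⟩
        refine hA.mem_of_tendsto
          (((hc u₀ hu₀Icc).tendsto).mono_left (nhdsWithin_le_nhds (s := Ioo (0:ℝ) u₀))) ?_
        exact Filter.eventually_of_mem self_mem_nhdsWithin
          (fun s hs => hlt s (le_of_lt hs.1) hs.2)
  rcases eq_or_lt_of_le hu₀1 with h1 | h1
  · intro r hr; exact hu₀S.2 r ⟨hr.1, by rw [h1]; exact hr.2⟩
  · exfalso
    have hB : c u₀ ∈ B := step u₀ hu₀Icc hu₀S.2 u₀ ⟨hu₀0, le_refl _⟩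
    obtain ⟨δ, hδ, hδ'⟩ := Metric.continuousAt_iff.1 (hc u₀ hu₀Icc) ε hε
    set u₁ : ℝ := min 1 (u₀ + δ/2) with hu₁def
    have hu₀u₁ : u₀ < u₁ := lt_min h1 (by linarith)
    have hu₁S : u₁ ∈ S := by
      refine ⟨⟨le_trans hu₀0 (le_of_lt hu₀u₁), min_le_left _ _⟩, fun r hr => ?_⟩
      rcases le_or_gt r u₀ with h | h
      · exact hu₀S.2 r ⟨hr.1, h⟩
      · have hd : dist r u₀ < δ := by
          rw [Real.dist_eq, abs_of_pos (by linarith)]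
          have : r ≤ u₀ + δ/2 := le_trans hr.2 (min_le_right _ _)
          linarith
        exact hBA (c u₀) hB (c r) (by rw [← dist_eq_norm]; exact le_of_lt (hδ' hd))
    exact absurd (le_csSup hSbdd hu₁S) (not_le.2 hu₀u₁)

variable {n : ℕ}

lemma sharp_add (Pb : Vec n → Fin n → Fin n → ℝ) (x w w' : Vec n) :
    sharp Pb x (w + w') = sharp Pb x w + sharp Pb x w' := by
  funext q
  show (∑ p, Pb x p q * (w p + w' p)) = (∑ p, Pb x p q * w p) + ∑ p, Pb x p q * w' p
  rw [← Finset.sum_add_distrib]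
  exact Finset.sum_congr rfl fun p _ => by ring

lemma sharp_smul (Pb : Vec n → Fin n → Fin n → ℝ) (x w : Vec n) (a : ℝ) :
    sharp Pb x (a • w) = a • sharp Pb x w := by
  funext q
  show (∑ p, Pb x p q * (a * w p)) = a * ∑ p, Pb x p q * w p
  rw [Finset.mul_sum]
  exact Finset.sum_congr rfl fun p _ => by ring

lemma sharp_zero (Pb : Vec n → Fin n → Fin n → ℝ) (x : Vec n) :
    sharp Pb x 0 = 0 := by
  funext q
  show (∑ p, Pb x p q * 0) = 0
  simp

/-- The claimed differential, as a continuous linear map. -/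
def flowDiff (Pb : Vec n → Fin n → Fin n → ℝ) (x : Vec n) (t : ℝ) : Pt n →L[ℝ] Pt n :=
  LinearMap.toContinuousLinearMap
    { toFun := fun v => (v.1 + t • sharp Pb x v.2, v.2)
      map_add' := by
        intro a b
        refine Prod.ext ?_ rfl
        show a.1 + b.1 + t • sharp Pb x (a.2 + b.2) = a.1 + t • sharp Pb x a.2 + (b.1 + t • sharp Pb x b.2)
        rw [sharp_add, smul_add]
        abel
      map_smul' := by
        intro m a
        refine Prod.ext ?_ rfl
        show m • a.1 + t • sharp Pb x (m • a.2) = m • (a.1 + t • sharp Pb x a.2)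
        rw [sharp_smul, smul_add, smul_comm m t]
    }

lemma spray_zero {U : Set (Vec n)} {Pb : Vec n → Fin n → Fin n → ℝ} {V : Pt n → Pt n}
    (hV : IsSpray U Pb V) {z : Vec n} (hz : z ∈ U) : V (z, (0 : Vec n)) = 0 := by
  have h1 : (V (z, (0:Vec n))).1 = 0 := by
    rw [hV.base (z, 0) hz]
    exact sharp_zero Pb z
  have h2 : V (z, (0:Vec n)) = ((2:ℝ) • (V (z,(0:Vec n))).1,
      (2:ℝ) • (2:ℝ) • (V (z,(0:Vec n))).2) := by
    have := hV.homog 2 two_pos (z, (0:Vec n)) hz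
    simpa using this
  have h5 : (V (z,(0:Vec n))).2 = (4:ℝ) • (V (z,(0:Vec n))).2 := by
    conv_lhs => rw [h2]
    rw [smul_smul]; norm_num
  have h6 : ((1:ℝ) - 4) • (V (z,(0:Vec n))).2 = 0 := by
    rw [sub_smul, one_smul, ← h5, sub_self]
  have h4 : (V (z,(0:Vec n))).2 = 0 := by
    rcases smul_eq_zero.1 h6 with h | h
    · norm_num at h
    · exact h
  exact Prod.ext h1 h4

lemma spray_bound {U : Set (Vec n)} {Pb : Vec n → Fin n → Fin n → ℝ} {V : Pt n → Pt n}
    (hV : IsSpray U Pb V) {M : ℝ} {s : Set (Vec n)} (hs : s ⊆ U)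
    (hM : ∀ z ∈ s, ∀ w₀ : Vec n, ‖w₀‖ = 1 → ‖V (z, w₀)‖ ≤ M)
    {z : Vec n} (hz : z ∈ s) {w : Vec n} :
    ‖(V (z, w)).1‖ ≤ M * ‖w‖ ∧ ‖(V (z, w)).2‖ ≤ M * ‖w‖ ^ 2 := by
  rcases eq_or_ne w 0 with rfl | hw0
  · simp [spray_zero hV (hs hz)]
  · have hnw : 0 < ‖w‖ := norm_pos_iff.2 hw0
    set w₀ : Vec n := ‖w‖⁻¹ • w with hw₀def
    have hw₀ : ‖w₀‖ = 1 := by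
      rw [hw₀def, norm_smul, norm_inv, norm_norm, inv_mul_cancel₀ (ne_of_gt hnw)]
    have hsw : ‖w‖ • w₀ = w := by
      rw [hw₀def, smul_smul, mul_inv_cancel₀ (ne_of_gt hnw), one_smul]
    have hMw := hM z hz w₀ hw₀
    have hM0 : 0 ≤ M := le_trans (norm_nonneg _) hMw
    have h2' : V (z, w) = (‖w‖ • (V (z, w₀)).1, ‖w‖ • ‖w‖ • (V (z, w₀)).2) := by
      have := hV.homog ‖w‖ hnw (z, w₀) (hs hz)
      simpa [hsw] using this
    constructor
    · rw [h2']
      have hns : ‖‖w‖ • (V (z, w₀)).1‖ = ‖w‖ * ‖(V (z, w₀)).1‖ := by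
        rw [norm_smul, norm_norm]
      rw [show ((‖w‖ • (V (z, w₀)).1, ‖w‖ • ‖w‖ • (V (z, w₀)).2) : Pt n).1
            = ‖w‖ • (V (z, w₀)).1 from rfl, hns, mul_comm M ‖w‖]
      exact mul_le_mul_of_nonneg_left (le_trans (norm_fst_le _) hMw) (le_of_lt hnw)
    · rw [h2']
      have hns : ‖‖w‖ • ‖w‖ • (V (z, w₀)).2‖ = ‖w‖ * (‖w‖ * ‖(V (z, w₀)).2‖) := by
        rw [norm_smul, norm_smul, norm_norm]
      rw [show ((‖w‖ • (V (z, w₀)).1, ‖w‖ • ‖w‖ • (V (z, w₀)).2) : Pt n).2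
            = ‖w‖ • ‖w‖ • (V (z, w₀)).2 from rfl, hns]
      have h3 : ‖(V (z, w₀)).2‖ ≤ M := le_trans (norm_snd_le _) hMw
      calc ‖w‖ * (‖w‖ * ‖(V (z, w₀)).2‖) ≤ ‖w‖ * (‖w‖ * M) := by
            apply mul_le_mul_of_nonneg_left _ (le_of_lt hnw)
            exact mul_le_mul_of_nonneg_left h3 (le_of_lt hnw)
        _ = M * ‖w‖ ^ 2 := by ring

lemma sharp_est {U : Set (Vec n)} (hU : IsOpen U) {Pb : Vec n → Fin n → Fin n → ℝ}
    (hPb : ∀ p q, ContDiffOn ℝ (⊤ : ℕ∞) (fun x => Pb x p q) U)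
    {x : Vec n} {R : ℝ} (hR : closedBall x R ⊆ U) :
    ∃ C : ℝ, 0 ≤ C ∧ ∀ z ∈ closedBall x R, ∀ z' ∈ closedBall x R, ∀ w w' : Vec n,
      ‖sharp Pb z w - sharp Pb z' w'‖ ≤ C * ‖w - w'‖ + C * ‖z - z'‖ * ‖w'‖ := by
  set PF : Vec n → (Fin n → Fin n → ℝ) := fun z p q => Pb z p q with hPFdef
  have hPF : ContDiffOn ℝ (⊤ : ℕ∞) PF U :=
    contDiffOn_pi.2 fun p => contDiffOn_pi.2 fun q => hPb p q
  obtain ⟨C₁, hC₁⟩ := (isCompact_closedBall x R).exists_bound_of_continuousOn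
    (hPF.continuousOn.mono hR)
  obtain ⟨N, hN⟩ := (isCompact_closedBall x R).exists_bound_of_continuousOn
    ((hPF.continuousOn_fderiv_of_isOpen hU (by exact_mod_cast le_top)).mono hR)
  have hlip : ∀ z ∈ closedBall x R, ∀ z' ∈ closedBall x R,
      ‖PF z - PF z'‖ ≤ N * ‖z - z'‖ := by
    intro z hz z' hz'
    exact (convex_closedBall x R).norm_image_sub_le_of_norm_hasFDerivWithin_le
      (fun y hy => ((hPF.contDiffAt (hU.mem_nhds (hR hy))).differentiableAt
        (by simp)).hasFDerivAt.hasFDerivWithinAt)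
      (fun y hy => hN y hy) hz' hz
  refine ⟨(n : ℝ) * (|C₁| + |N|), by positivity, ?_⟩
  intro z hz z' hz' w w'
  have hbd : ∀ p q, ‖Pb z p q‖ ≤ |C₁| := by
    intro p q
    calc ‖Pb z p q‖ ≤ ‖PF z p‖ := norm_le_pi_norm (PF z p) q
      _ ≤ ‖PF z‖ := norm_le_pi_norm (PF z) p
      _ ≤ C₁ := hC₁ z hz
      _ ≤ |C₁| := le_abs_self _
  have habs : ∀ p q, ‖Pb z p q - Pb z' p q‖ ≤ |N| * ‖z - z'‖ := by
    intro p q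
    calc ‖Pb z p q - Pb z' p q‖ = ‖((PF z - PF z') p) q‖ := rfl
      _ ≤ ‖(PF z - PF z') p‖ := norm_le_pi_norm _ q
      _ ≤ ‖PF z - PF z'‖ := norm_le_pi_norm _ p
      _ ≤ N * ‖z - z'‖ := hlip z hz z' hz'
      _ ≤ |N| * ‖z - z'‖ := mul_le_mul_of_nonneg_right (le_abs_self _) (norm_nonneg _)
  have hrhs : (0:ℝ) ≤ (n : ℝ) * (|C₁| + |N|) * ‖w - w'‖
      + (n : ℝ) * (|C₁| + |N|) * ‖z - z'‖ * ‖w'‖ := by positivity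
  refine (pi_norm_le_iff_of_nonneg hrhs).2 fun q => ?_
  show ‖(∑ p, Pb z p q * w p) - ∑ p, Pb z' p q * w' p‖ ≤ _
  rw [← Finset.sum_sub_distrib]
  calc ‖∑ p, (Pb z p q * w p - Pb z' p q * w' p)‖
      ≤ ∑ p : Fin n, ‖Pb z p q * w p - Pb z' p q * w' p‖ := norm_sum_le _ _
    _ ≤ ∑ _p : Fin n, (|C₁| * ‖w - w'‖ + |N| * ‖z - z'‖ * ‖w'‖) := by
        apply Finset.sum_le_sum
        intro p _
        have hre : Pb z p q * w p - Pb z' p q * w' p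
            = Pb z p q * (w p - w' p) + (Pb z p q - Pb z' p q) * w' p := by ring
        rw [hre]
        calc ‖Pb z p q * (w p - w' p) + (Pb z p q - Pb z' p q) * w' p‖
            ≤ ‖Pb z p q * (w p - w' p)‖ + ‖(Pb z p q - Pb z' p q) * w' p‖ := norm_add_le _ _
          _ = ‖Pb z p q‖ * ‖w p - w' p‖ + ‖Pb z p q - Pb z' p q‖ * ‖w' p‖ := by
              rw [norm_mul, norm_mul]
          _ ≤ |C₁| * ‖w - w'‖ + (|N| * ‖z - z'‖) * ‖w'‖ := by
              apply add_le_add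
              · exact mul_le_mul (hbd p q) (norm_le_pi_norm (w - w') p)
                  (norm_nonneg _) (abs_nonneg _)
              · exact mul_le_mul (habs p q) (norm_le_pi_norm w' p)
                  (norm_nonneg _) (by positivity)
          _ = |C₁| * ‖w - w'‖ + |N| * ‖z - z'‖ * ‖w'‖ := by ring
    _ = (n : ℝ) * (|C₁| * ‖w - w'‖ + |N| * ‖z - z'‖ * ‖w'‖) := by
        rw [Finset.sum_const, Finset.card_univ, Fintype.card_fin, nsmul_eq_mul]
    _ ≤ (n : ℝ) * (|C₁| + |N|) * ‖w - w'‖ + (n : ℝ) * (|C₁| + |N|) * ‖z - z'‖ * ‖w'‖ := by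
        have h1 : (0:ℝ) ≤ (n:ℝ) := Nat.cast_nonneg _
        nlinarith [mul_nonneg (mul_nonneg h1 (abs_nonneg N)) (norm_nonneg (w - w')),
          mul_nonneg (mul_nonneg h1 (abs_nonneg C₁))
            (mul_nonneg (norm_nonneg (z - z')) (norm_nonneg w'))]

end FlowDifferentialAux

set_option maxHeartbeats 2000000 in
/-- Under the canonical identification `T_{0_x}(T*M) ≅ T_x M ⊕ T*_x M`,
`v ↦ (v̄, θ_v)`, the differential of the flow of a Poisson spray at a zero
covector `0_x` is `(dφ_t)_{0_x} : (v̄, θ_v) ↦ (v̄ + t π♯(θ_v), θ_v)`. -/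
theorem flow_differential_at_zero_section
    {n : ℕ} (U : Set (Vec n)) (hU : IsOpen U)
    (Pb : Vec n → Fin n → Fin n → ℝ) (hPb : IsPoissonOn U Pb)
    (V : Pt n → Pt n) (hV : IsSpray U Pb V)
    (D : Set (ℝ × Pt n)) (φ : ℝ → Pt n → Pt n) (hφ : IsLocalFlow U V D φ)
    (x : Vec n) (hx : x ∈ U) (t : ℝ)
    -- the flow is defined up to time `t` on a neighborhood `W` of `0_x`
    (W : Set (Pt n)) (hWopen : IsOpen W) (hxW : ((x, (0 : Vec n)) : Pt n) ∈ W)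
    (hWD : ∀ η ∈ W, ∀ s ∈ uIcc (0:ℝ) t, (s, η) ∈ D)
    (v : Pt n) :
    fderiv ℝ (φ t) ((x, (0 : Vec n)) : Pt n) v
      = (v.1 + t • sharp Pb x v.2, v.2) := by
  classical
  -- a closed ball around `x` inside `U`
  obtain ⟨ρ', hρ'pos, hρ'U⟩ := Metric.isOpen_iff.1 hU x hx
  set ρ : ℝ := ρ' / 3 with hρdef
  have hρpos : 0 < ρ := by positivity
  have hball : Metric.closedBall x (2 * ρ) ⊆ U := by
    intro z hz
    apply hρ'U
    rw [Metric.mem_ball]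
    rw [Metric.mem_closedBall] at hz
    linarith
  -- a ball around `(x, 0)` inside `W`
  obtain ⟨rW, hrWpos, hrW⟩ := Metric.isOpen_iff.1 hWopen _ hxW
  -- a bound for the spray on the unit sphere bundle over the ball
  have hKc : IsCompact ((Metric.closedBall x (2*ρ)) ×ˢ (Metric.sphere (0 : Vec n) 1)) :=
    (isCompact_closedBall _ _).prod (isCompact_sphere _ _)
  have hKcsub : (Metric.closedBall x (2*ρ)) ×ˢ (Metric.sphere (0:Vec n) 1)
      ⊆ U ×ˢ (univ : Set (Vec n)) := prod_mono hball (subset_univ _)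
  obtain ⟨M₀, hM₀⟩ := hKc.exists_bound_of_continuousOn (hV.smooth.continuousOn.mono hKcsub)
  set M : ℝ := max M₀ 0 with hMdef
  have hM0 : 0 ≤ M := le_max_right _ _
  have hMb : ∀ z ∈ Metric.closedBall x (2*ρ), ∀ w₀ : Vec n, ‖w₀‖ = 1 → ‖V (z, w₀)‖ ≤ M := by
    intro z hz w₀ hw₀
    refine le_trans (hM₀ (z, w₀) ?_) (le_max_left _ _)
    exact ⟨hz, by simpa [Metric.mem_sphere, dist_zero_right] using hw₀⟩
  have hVb : ∀ z ∈ Metric.closedBall x (2*ρ), ∀ w : Vec n,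
      ‖(V (z, w)).1‖ ≤ M * ‖w‖ ∧ ‖(V (z, w)).2‖ ≤ M * ‖w‖ ^ 2 :=
    fun z hz w => spray_bound hV hball hMb hz
  -- bilinear estimates for `sharp`
  obtain ⟨C, hC0, hC⟩ := sharp_est hU hPb.1.1 hball
  -- constants
  set K : ℝ := |t| * M with hKdef
  have hK0 : 0 ≤ K := mul_nonneg (abs_nonneg t) hM0
  set B : ℝ := Real.exp K with hBdef
  have hB1 : 1 ≤ B := Real.one_le_exp hK0
  have hB0 : 0 < B := lt_of_lt_of_le one_pos hB1
  set r₀ : ℝ := min (min 1 ρ) (min (rW/2) (min (1/(2*B)) (ρ/(2*(|t| * M*B+1))))) with hr₀def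
  have hr₀pos : 0 < r₀ :=
    lt_min (lt_min one_pos hρpos) (lt_min (by positivity) (lt_min (by positivity) (by positivity)))
  have hr₀1 : r₀ ≤ 1 := le_trans (min_le_left _ _) (min_le_left _ _)
  have hr₀ρ : r₀ ≤ ρ := le_trans (min_le_left _ _) (min_le_right _ _)
  have hr₀W : r₀ ≤ rW/2 := le_trans (min_le_right _ _) (min_le_left _ _)
  have hr₀B : B * r₀ ≤ 1/2 := by
    have h1 : r₀ ≤ 1/(2*B) :=
      le_trans (min_le_right _ _) (le_trans (min_le_right _ _) (min_le_left _ _))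
    have h2 := (le_div_iff₀ (by positivity : (0:ℝ) < 2*B)).1 h1
    nlinarith
  have hr₀ρ2 : |t| * M * B * r₀ ≤ ρ/2 := by
    have h1 : r₀ ≤ ρ/(2*(|t| * M*B+1)) :=
      le_trans (min_le_right _ _) (le_trans (min_le_right _ _) (min_le_right _ _))
    have h2 := (le_div_iff₀ (by positivity : (0:ℝ) < 2*(|t| * M*B+1))).1 h1
    nlinarith [hr₀pos.le]
  set Cq : ℝ := |t| * M*B^2 + |t| * C*(|t| * M*B^2 + 1 + |t| * M*B) with hCqdef
  have hCq0 : 0 ≤ Cq := by positivity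
  -- the key quadratic estimate
  have key : ∀ h : Pt n, ‖h‖ ≤ r₀ →
      ‖φ t ((x + h.1, h.2) : Pt n) - ((x + h.1 + t • sharp Pb x h.2, h.2) : Pt n)‖
        ≤ Cq * ‖h‖ ^ 2 := by
    intro h hh
    set y : Vec n := x + h.1 with hydef
    set η : Pt n := (y, h.2) with hηdef
    have hh1 : ‖h.1‖ ≤ r₀ := le_trans (norm_fst_le h) hh
    have hh2 : ‖h.2‖ ≤ r₀ := le_trans (norm_snd_le h) hh
    have hηW : η ∈ W := by
      apply hrW
      rw [Metric.mem_ball, dist_eq_norm]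
      have hsubη : η - ((x, (0:Vec n)) : Pt n) = h := by
        refine Prod.ext ?_ ?_
        · show y - x = h.1
          rw [hydef]; abel
        · show h.2 - 0 = h.2
          rw [sub_zero]
      rw [hsubη]
      calc ‖h‖ ≤ r₀ := hh
        _ ≤ rW/2 := hr₀W
        _ < rW := by linarith
    have hmemD : ∀ u ∈ Icc (0:ℝ) 1, (t*u, η) ∈ D := by
      intro u hu
      apply hWD η hηW
      rw [Set.mem_uIcc]
      rcases le_or_gt 0 t with ht | ht
      · exact Or.inl ⟨mul_nonneg ht hu.1, by nlinarith [hu.1, hu.2]⟩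
      · exact Or.inr ⟨by nlinarith [hu.1, hu.2], by nlinarith [hu.1]⟩
    set c : ℝ → Pt n := fun u => φ (t*u) η with hcdef
    have hc0 : c 0 = η := by
      show φ (t*0) η = η
      rw [mul_zero]
      exact hφ.init η
    have hcder : ∀ u ∈ Icc (0:ℝ) 1, HasDerivAt c (t • V (c u)) u := by
      intro u hu
      have h1 : HasDerivAt (fun s => φ s η) (V (φ (t*u) η)) (t*u) :=
        hφ.hasDeriv (t*u) η (hmemD u hu)
      have h2 : HasDerivAt (fun u : ℝ => t*u) t u := by
        simpa using (hasDerivAt_id u).const_mul t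
      have h3 := h1.scomp u h2
      simpa [hcdef, Function.comp_def] using h3
    have hcder1 : ∀ u ∈ Icc (0:ℝ) 1, HasDerivAt (fun r => (c r).1) (t • (V (c u)).1) u := by
      intro u hu
      have := (ContinuousLinearMap.fst ℝ (Vec n) (Vec n)).hasFDerivAt.comp_hasDerivAt u
        (hcder u hu)
      simpa [Function.comp_def] using this
    have hcder2 : ∀ u ∈ Icc (0:ℝ) 1, HasDerivAt (fun r => (c r).2) (t • (V (c u)).2) u := by
      intro u hu
      have := (ContinuousLinearMap.snd ℝ (Vec n) (Vec n)).hasFDerivAt.comp_hasDerivAt u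
        (hcder u hu)
      simpa [Function.comp_def] using this
    set A : Set (Pt n) := {p : Pt n | ‖p.1 - x‖ ≤ 2*ρ ∧ ‖p.2‖ ≤ 1} with hAdef
    set Bs : Set (Pt n) := {p : Pt n | ‖p.1 - x‖ ≤ 3*ρ/2 ∧ ‖p.2‖ ≤ 1/2} with hBsdef
    have hmemU : ∀ p : Pt n, p ∈ A → p.1 ∈ Metric.closedBall x (2*ρ) := by
      intro p hp
      rw [Metric.mem_closedBall, dist_eq_norm]
      exact hp.1
    -- Gronwall bound for the fiber component
    have gron2 : ∀ u ∈ Icc (0:ℝ) 1, (∀ r ∈ Icc (0:ℝ) u, c r ∈ A) →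
        ∀ r ∈ Icc (0:ℝ) u, ‖(c r).2‖ ≤ B * ‖h.2‖ := by
      intro u hu hcont r hr
      have hsub : Icc (0:ℝ) u ⊆ Icc (0:ℝ) 1 := Icc_subset_Icc le_rfl hu.2
      have hgr := norm_le_gronwallBound_of_norm_deriv_right_le
        (f := fun r => (c r).2) (f' := fun r => t • (V (c r)).2) (δ := ‖h.2‖) (K := K)
        (ε := 0) (a := 0) (b := u)
        (fun r' hr' => ((hcder2 r' (hsub hr')).continuousAt).continuousWithinAt)
        (fun r' hr' => (hcder2 r' (hsub (Ico_subset_Icc_self hr'))).hasDerivWithinAt)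
        (by show ‖(c 0).2‖ ≤ ‖h.2‖; rw [hc0])
        ?_ r hr
      · rw [gronwallBound_ε0] at hgr
        refine le_trans hgr ?_
        rw [mul_comm B ‖h.2‖]
        apply mul_le_mul_of_nonneg_left _ (norm_nonneg _)
        rw [hBdef]
        apply Real.exp_le_exp.2
        have hr1 : r - 0 ≤ 1 := by
          have := hr.2; have := hu.2; linarith
        nlinarith [hK0, hr.1]
      · intro r' hr'
        have hrIcc : r' ∈ Icc (0:ℝ) u := Ico_subset_Icc_self hr'
        have hA := hcont r' hrIcc
        have hb := (hVb (c r').1 (hmemU _ hA) (c r').2).2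
        rw [norm_smul, Real.norm_eq_abs, add_zero]
        calc |t| * ‖(V (c r')).2‖ ≤ |t| * (M * ‖(c r').2‖^2) :=
              mul_le_mul_of_nonneg_left hb (abs_nonneg t)
          _ ≤ K * ‖(c r').2‖ := by
              rw [hKdef]
              have hs : ‖(c r').2‖^2 ≤ ‖(c r').2‖ := by
                nlinarith [hA.2, norm_nonneg (c r').2]
              have := mul_le_mul_of_nonneg_left hs (mul_nonneg (abs_nonneg t) hM0)
              nlinarith [this]
    -- mean-value bound for the base component
    have gron1 : ∀ u ∈ Icc (0:ℝ) 1, (∀ r ∈ Icc (0:ℝ) u, c r ∈ A) →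
        ∀ r ∈ Icc (0:ℝ) u, ‖(c r).1 - y‖ ≤ |t| * M*B*‖h.2‖ * r := by
      intro u hu hcont r hr
      have hsub : Icc (0:ℝ) u ⊆ Icc (0:ℝ) 1 := Icc_subset_Icc le_rfl hu.2
      have hb2 := gron2 u hu hcont
      have hmv := norm_image_sub_le_of_norm_deriv_le_segment'
        (f := fun r => (c r).1) (f' := fun r => t • (V (c r)).1) (a := 0) (b := u)
        (C := |t| * M*B*‖h.2‖)
        (fun r' hr' => (hcder1 r' (hsub hr')).hasDerivWithinAt)
        ?_ r hr
      · have h9 : (c 0).1 = y := by rw [hc0]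
        simpa [h9] using hmv
      · intro r' hr'
        have hrIcc : r' ∈ Icc (0:ℝ) u := Ico_subset_Icc_self hr'
        have hA := hcont r' hrIcc
        have hb := (hVb (c r').1 (hmemU _ hA) (c r').2).1
        rw [norm_smul, Real.norm_eq_abs]
        calc |t| * ‖(V (c r')).1‖ ≤ |t| * (M * ‖(c r').2‖) :=
              mul_le_mul_of_nonneg_left hb (abs_nonneg t)
          _ ≤ |t| * M*B*‖h.2‖ := by
              have h1 := hb2 r' hrIcc
              nlinarith [abs_nonneg t, hM0, norm_nonneg (c r').2]
    -- containment by continuous induction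
    have hAclosed : IsClosed A :=
      IsClosed.inter (isClosed_le ((continuous_fst.sub continuous_const).norm) continuous_const)
        (isClosed_le continuous_snd.norm continuous_const)
    have hεpos : (0:ℝ) < min (ρ/2) (1/2) := lt_min (by positivity) (by norm_num)
    have hcontain : ∀ r ∈ Icc (0:ℝ) 1, c r ∈ A := by
      refine reach c (fun u hu => (hcder u hu).continuousAt) A Bs hAclosed hεpos ?_ ?_ ?_
      · -- collar
        intro a ha p hpa
        constructor
        · have h1 : ‖p.1 - a.1‖ ≤ ‖p - a‖ := norm_fst_le (p - a)
          have h2 : ‖p.1 - x‖ ≤ ‖p.1 - a.1‖ + ‖a.1 - x‖ := by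
            have := norm_add_le (p.1 - a.1) (a.1 - x)
            simpa using this
          have h3 := ha.1
          have h4 : min (ρ/2) (1/2) ≤ ρ/2 := min_le_left _ _
          linarith
        · have h1 : ‖p.2 - a.2‖ ≤ ‖p - a‖ := norm_snd_le (p - a)
          have h2 : ‖p.2‖ ≤ ‖p.2 - a.2‖ + ‖a.2‖ := by
            have := norm_add_le (p.2 - a.2) a.2
            simpa using this
          have h3 := ha.2
          have h4 : min (ρ/2) (1/2) ≤ 1/2 := min_le_right _ _
          linarith
      · -- initial point
        rw [hc0]
        constructor
        · show ‖y - x‖ ≤ 2*ρ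
          rw [hydef]
          have : x + h.1 - x = h.1 := by abel
          rw [this]
          linarith
        · show ‖h.2‖ ≤ 1
          linarith
      · -- improvement step
        intro u hu hcont r hr
        have hb2 := gron2 u hu hcont r hr
        have hb1 := gron1 u hu hcont r hr
        have hr1 : r ≤ 1 := le_trans hr.2 hu.2
        constructor
        · have h2 : ‖(c r).1 - x‖ ≤ ‖(c r).1 - y‖ + ‖y - x‖ := by
            have := norm_add_le ((c r).1 - y) (y - x)
            simpa using this
          have h3 : ‖y - x‖ = ‖h.1‖ := by
            rw [hydef]
            congr 1
            abel
          have h4 : |t| * M*B*‖h.2‖*r ≤ |t| * M*B*r₀ := by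
            have h4a : ‖h.2‖*r ≤ r₀ := by
              nlinarith [hr.1, hr1, hh2, norm_nonneg h.2, hr₀pos.le]
            have := mul_le_mul_of_nonneg_left h4a
              (mul_nonneg (mul_nonneg (abs_nonneg t) hM0) hB0.le)
            nlinarith [this]
          rw [h3] at h2
          linarith
        · have h4 : B*‖h.2‖ ≤ B*r₀ := mul_le_mul_of_nonneg_left hh2 hB0.le
          linarith
    have hb2 := gron2 1 ⟨zero_le_one, le_refl 1⟩ hcontain
    have hb1 := gron1 1 ⟨zero_le_one, le_refl 1⟩ hcontain
    -- second-component quadratic estimate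
    have hE2 : ∀ r ∈ Icc (0:ℝ) 1, ‖(c r).2 - h.2‖ ≤ |t| * M*B^2*‖h.2‖^2 := by
      intro r hr
      have hmv := norm_image_sub_le_of_norm_deriv_le_segment'
        (f := fun r => (c r).2) (f' := fun r => t • (V (c r)).2) (a := 0) (b := 1)
        (C := |t| * M*B^2*‖h.2‖^2)
        (fun r' hr' => (hcder2 r' hr').hasDerivWithinAt)
        ?_ r hr
      · have h9 : (c 0).2 = h.2 := by rw [hc0]
        have hcoef : (0:ℝ) ≤ |t| * M*B^2*‖h.2‖^2 :=
          mul_nonneg (mul_nonneg (mul_nonneg (abs_nonneg t) hM0) (sq_nonneg B))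
            (sq_nonneg ‖h.2‖)
        have hmv' : ‖(c r).2 - h.2‖ ≤ |t| * M*B^2*‖h.2‖^2 * r := by
          simpa [h9] using hmv
        have h10 : |t| * M*B^2*‖h.2‖^2 * r ≤ |t| * M*B^2*‖h.2‖^2 := by
          nlinarith [hr.1, hr.2, hcoef]
        exact le_trans hmv' h10
      · intro r' hr'
        have hrIcc : r' ∈ Icc (0:ℝ) 1 := Ico_subset_Icc_self hr'
        have hA := hcontain r' hrIcc
        have hb := (hVb (c r').1 (hmemU _ hA) (c r').2).2
        have h1 := hb2 r' hrIcc
        rw [norm_smul, Real.norm_eq_abs]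
        calc |t| * ‖(V (c r')).2‖ ≤ |t| * (M * ‖(c r').2‖^2) :=
              mul_le_mul_of_nonneg_left hb (abs_nonneg t)
          _ ≤ |t| * M*B^2*‖h.2‖^2 := by
              have hs := mul_self_le_mul_self (norm_nonneg (c r').2) h1
              have := mul_le_mul_of_nonneg_left hs (mul_nonneg (abs_nonneg t) hM0)
              nlinarith [this]
    -- first-component estimate
    set g : ℝ → Vec n := fun r => (c r).1 - r • (t • sharp Pb x h.2) with hgdef
    have hgder : ∀ r ∈ Icc (0:ℝ) 1,
        HasDerivAt g (t • (V (c r)).1 - t • sharp Pb x h.2) r := by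
      intro r hr
      have h1 : HasDerivAt (fun r : ℝ => r • (t • sharp Pb x h.2)) (t • sharp Pb x h.2) r := by
        simpa using (hasDerivAt_id r).smul_const (t • sharp Pb x h.2)
      exact (hcder1 r hr).sub h1
    have hE1 : ‖(c 1).1 - y - t • sharp Pb x h.2‖
        ≤ |t| * C*(|t| * M*B^2 + 1 + |t| * M*B) * ‖h‖^2 := by
      have hmv := norm_image_sub_le_of_norm_deriv_le_segment'
        (f := g) (f' := fun r => t • (V (c r)).1 - t • sharp Pb x h.2) (a := 0) (b := 1)
        (C := |t| * C*(|t| * M*B^2 + 1 + |t| * M*B) * ‖h‖^2)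
        (fun r' hr' => (hgder r' hr').hasDerivWithinAt)
        ?_ 1 ⟨zero_le_one, le_refl 1⟩
      · have hg1 : g 1 = (c 1).1 - t • sharp Pb x h.2 := by
          rw [hgdef]; simp
        have hg0 : g 0 = y := by
          rw [hgdef]
          simp only [zero_smul, sub_zero]
          rw [hc0]
        rw [hg1, hg0, sub_zero, mul_one] at hmv
        calc ‖(c 1).1 - y - t • sharp Pb x h.2‖
            = ‖(c 1).1 - t • sharp Pb x h.2 - y‖ := by
              congr 1
              abel
          _ ≤ _ := hmv
      · intro r' hr'
        have hrIcc : r' ∈ Icc (0:ℝ) 1 := Ico_subset_Icc_self hr'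
        have hA := hcontain r' hrIcc
        have hcU : (c r').1 ∈ U := hball (hmemU _ hA)
        have hbase : (V (c r')).1 = sharp Pb (c r').1 (c r').2 := hV.base (c r') hcU
        show ‖t • (V (c r')).1 - t • sharp Pb x h.2‖ ≤ _
        rw [hbase, ← smul_sub, norm_smul, Real.norm_eq_abs]
        have hsharp := hC (c r').1 (hmemU _ hA) x
          (Metric.mem_closedBall_self (by positivity)) (c r').2 h.2
        have hd2 := hE2 r' hrIcc
        have hd1 : ‖(c r').1 - x‖ ≤ ‖h.1‖ + |t| * M*B*‖h.2‖ := by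
          have h2 : ‖(c r').1 - x‖ ≤ ‖(c r').1 - y‖ + ‖y - x‖ := by
            have := norm_add_le ((c r').1 - y) (y - x)
            simpa using this
          have h3 : ‖y - x‖ = ‖h.1‖ := by
            rw [hydef]; congr 1; abel
          have h4 := hb1 r' hrIcc
          have h5 : |t| * M*B*‖h.2‖*r' ≤ |t| * M*B*‖h.2‖ := by
            have h6 : (0:ℝ) ≤ |t| * M*B*‖h.2‖ := by positivity
            nlinarith [hrIcc.1, hrIcc.2]
          rw [h3] at h2
          linarith
        have hfin : ‖sharp Pb (c r').1 (c r').2 - sharp Pb x h.2‖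
            ≤ C * (|t| * M*B^2*‖h.2‖^2) + C * (‖h.1‖ + |t| * M*B*‖h.2‖) * ‖h.2‖ := by
          refine le_trans hsharp ?_
          apply add_le_add
          · exact mul_le_mul_of_nonneg_left hd2 hC0
          · apply mul_le_mul_of_nonneg_right _ (norm_nonneg _)
            exact mul_le_mul_of_nonneg_left hd1 hC0
        have hh1' : ‖h.1‖ ≤ ‖h‖ := norm_fst_le h
        have hh2' : ‖h.2‖ ≤ ‖h‖ := norm_snd_le h
        calc |t| * ‖sharp Pb (c r').1 (c r').2 - sharp Pb x h.2‖
            ≤ |t| * (C * (|t| * M*B^2*‖h.2‖^2) + C * (‖h.1‖ + |t| * M*B*‖h.2‖) * ‖h.2‖) :=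
              mul_le_mul_of_nonneg_left hfin (abs_nonneg t)
          _ ≤ |t| * C*(|t| * M*B^2 + 1 + |t| * M*B) * ‖h‖^2 := by
              have e1 : ‖h.2‖*‖h.2‖ ≤ ‖h‖*‖h‖ := mul_self_le_mul_self (norm_nonneg h.2) hh2'
              have e2 : ‖h.1‖*‖h.2‖ ≤ ‖h‖*‖h‖ :=
                mul_le_mul hh1' hh2' (norm_nonneg _) (norm_nonneg _)
              have k2 : (0:ℝ) ≤ |t| * C := mul_nonneg (abs_nonneg t) hC0
              have k1 : (0:ℝ) ≤ |t| * C*(|t| * M*B^2) :=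
                mul_nonneg k2 (mul_nonneg (mul_nonneg (abs_nonneg t) hM0) (sq_nonneg B))
              have k3 : (0:ℝ) ≤ |t| * C*(|t| * M*B) :=
                mul_nonneg k2 (mul_nonneg (mul_nonneg (abs_nonneg t) hM0) hB0.le)
              nlinarith [mul_le_mul_of_nonneg_left e1 k1, mul_le_mul_of_nonneg_left e2 k2,
                mul_le_mul_of_nonneg_left e1 k3]
    -- assemble
    have hc1 : c 1 = φ t η := by
      show φ (t*1) η = φ t η
      rw [mul_one]
    have hT2 : ‖(c 1).2 - h.2‖ ≤ |t| * M*B^2*‖h‖^2 := by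
      have h1 := hE2 1 ⟨zero_le_one, le_refl 1⟩
      have hh2' : ‖h.2‖ ≤ ‖h‖ := norm_snd_le h
      have : |t| * M*B^2*‖h.2‖^2 ≤ |t| * M*B^2*‖h‖^2 := by
        have hs := mul_self_le_mul_self (norm_nonneg h.2) hh2'
        have := mul_le_mul_of_nonneg_left hs
          (mul_nonneg (mul_nonneg (abs_nonneg t) hM0) (sq_nonneg B))
        nlinarith [this]
      linarith
    rw [← hc1]
    have hTval : c 1 - ((y + t • sharp Pb x h.2, h.2) : Pt n)
        = (((c 1).1 - (y + t • sharp Pb x h.2), (c 1).2 - h.2) : Pt n) := rfl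
    calc ‖c 1 - ((y + t • sharp Pb x h.2, h.2) : Pt n)‖
        = max ‖(c 1).1 - (y + t • sharp Pb x h.2)‖ ‖(c 1).2 - h.2‖ := by
          rw [hTval, Prod.norm_def]
      _ ≤ Cq * ‖h‖^2 := by
          apply max_le
          · have : (c 1).1 - (y + t • sharp Pb x h.2) = (c 1).1 - y - t • sharp Pb x h.2 := by
              abel
            rw [this]
            refine le_trans hE1 ?_
            rw [hCqdef]
            have hpos : (0:ℝ) ≤ |t| * M*B^2*‖h‖^2 :=
              mul_nonneg (mul_nonneg (mul_nonneg (abs_nonneg t) hM0) (sq_nonneg B))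
                (sq_nonneg ‖h‖)
            nlinarith [hpos]
          · refine le_trans hT2 ?_
            rw [hCqdef]
            have hq1 : (0:ℝ) ≤ |t| * M*B^2 + 1 + |t| * M*B := by
              have := mul_nonneg (mul_nonneg (abs_nonneg t) hM0) (sq_nonneg B)
              have := mul_nonneg (mul_nonneg (abs_nonneg t) hM0) hB0.le
              nlinarith
            have hpos : (0:ℝ) ≤ |t| * C*(|t| * M*B^2 + 1 + |t| * M*B) * ‖h‖^2 :=
              mul_nonneg (mul_nonneg (mul_nonneg (abs_nonneg t) hC0) hq1) (sq_nonneg ‖h‖)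
            nlinarith [hpos]
  -- the zero section point is fixed
  have hfix : φ t ((x, (0:Vec n)) : Pt n) = ((x, (0:Vec n)) : Pt n) := by
    have h0 := key 0 (by simpa using hr₀pos.le)
    simp only [Prod.fst_zero, Prod.snd_zero, add_zero, sharp_zero, smul_zero, norm_zero] at h0
    have h1 : ‖φ t ((x + 0, (0:Vec n)) : Pt n) - ((x + 0 + 0, (0:Vec n)) : Pt n)‖ ≤ 0 := by
      simpa using h0
    have h2 := norm_le_zero_iff.1 h1
    have h3 := sub_eq_zero.1 h2
    simpa using h3
  -- conclude via the little-o characterization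
  have hL : HasFDerivAt (φ t) (flowDiff Pb x t) ((x, (0:Vec n)) : Pt n) := by
    rw [hasFDerivAt_iff_isLittleO_nhds_zero, Asymptotics.isLittleO_iff]
    intro ε hε
    rw [Metric.eventually_nhds_iff]
    refine ⟨min r₀ (ε/(Cq+1)), lt_min hr₀pos (by positivity), ?_⟩
    intro h hdist
    rw [dist_zero_right] at hdist
    have hhr₀ : ‖h‖ ≤ r₀ := le_of_lt (lt_of_lt_of_le hdist (min_le_left _ _))
    have hhε : ‖h‖ ≤ ε/(Cq+1) := le_of_lt (lt_of_lt_of_le hdist (min_le_right _ _))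
    have hk := key h hhr₀
    have harg : ((x, (0:Vec n)) : Pt n) + h = ((x + h.1, h.2) : Pt n) :=
      Prod.ext rfl (zero_add h.2)
    have hLh : ((x, (0:Vec n)) : Pt n) + (flowDiff Pb x t) h
        = ((x + h.1 + t • sharp Pb x h.2, h.2) : Pt n) := by
      refine Prod.ext ?_ (zero_add h.2)
      show x + (h.1 + t • sharp Pb x h.2) = x + h.1 + t • sharp Pb x h.2
      rw [add_assoc]
    rw [harg, hfix]
    calc ‖φ t ((x + h.1, h.2) : Pt n) - ((x, (0:Vec n)) : Pt n) - (flowDiff Pb x t) h‖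
        = ‖φ t ((x + h.1, h.2) : Pt n) - ((x + h.1 + t • sharp Pb x h.2, h.2) : Pt n)‖ := by
          rw [sub_sub, hLh]
      _ ≤ Cq * ‖h‖^2 := hk
      _ ≤ ε * ‖h‖ := by
          have h1 := (le_div_iff₀ (by positivity : (0:ℝ) < Cq+1)).1 hhε
          nlinarith [norm_nonneg h, hCq0]
  rw [hL.fderiv]
  rfl

end PoissonPaper
end
end

section
/- Let (M, π) be a Poisson manifold and ∇ a torsion-free classical connection on TM. Then for any cotangent path a with base path γ, any smooth path θ in T*M above γ, and any smooth path v in TM above γ, one has ⟨∇̄_a(θ), v⟩ + ⟨θ, ∇̄_a(v)⟩ = d/dt ⟨θ, v⟩, where ∇̄_a denotes the derivative along the cotangent path a with respect to the induced contravariant connections on T*M and TM. -/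
/-!
Formalization framework for "On the existence of symplectic realizations"
(Crainic–Mărcuț).  We work on a chart: the Poisson manifold is an open set
`U ⊆ ℝⁿ` (with `Vec n := Fin n → ℝ`), its cotangent bundle is
`T*U = U × ℝⁿ ⊆ Pt n := Vec n × Vec n`, with bundle projection `Prod.fst`.
A bivector field is given by its components `Pb x p q = π_{pq}(x)`, a classical
connection on `TM` by its Christoffel symbols `Γ x p q r = Γ_{pq}^r(x)`.
-/

noncomputable section
open Set

namespace PoissonPaper

variable {n : ℕ}

private lemma sum_swap13 {n : ℕ} (F : Fin n → Fin n → Fin n → ℝ) :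
    ∑ r, ∑ p, ∑ q, F r p q = ∑ r, ∑ p, ∑ q, F q p r := by
  calc ∑ r, ∑ p, ∑ q, F r p q
      = ∑ r, ∑ q, ∑ p, F r p q := Finset.sum_congr rfl fun _ _ => Finset.sum_comm
    _ = ∑ q, ∑ r, ∑ p, F r p q := Finset.sum_comm
    _ = ∑ q, ∑ p, ∑ r, F r p q := Finset.sum_congr rfl fun _ _ => Finset.sum_comm

/-- **Lemma (compatibility with the pairing).** If the classical connection
`∇` is torsion-free then, for any cotangent path `a` with base path `γ`, any
smooth path `θ` in `T*M` above `γ` and any smooth path `v` in `TM` above `γ`,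
`⟨∇̄_a(θ), v⟩ + ⟨θ, ∇̄_a(v)⟩ = d/dt ⟨θ, v⟩`,
where `∇̄_a` denotes the derivative along `a` for the induced contravariant
connections on `T*M` and `TM`. -/
theorem pairing_derivative_along_cotangent_path
    {n : ℕ} (U : Set (Vec n)) (hU : IsOpen U)
    (Pb : Vec n → Fin n → Fin n → ℝ) (hPb : IsPoissonOn U Pb)
    (Γ : Vec n → Fin n → Fin n → Fin n → ℝ)
    (hΓsym : ∀ x p q r, Γ x q p r = Γ x p q r)  -- torsion-free
    (hΓ : ∀ p q r, ContDiffOn ℝ (⊤ : ℕ∞) (fun x => Γ x p q r) U)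
    (a γ : ℝ → Vec n)
    (hγU : ∀ t ∈ Icc (0:ℝ) 1, γ t ∈ U)
    (hcot : ∀ t ∈ Icc (0:ℝ) 1, HasDerivAt γ (sharp Pb (γ t) (a t)) t)
    (θ v : ℝ → Vec n)
    (hθ : ∀ r, Differentiable ℝ fun s => θ s r)
    (hv : ∀ r, Differentiable ℝ fun s => v s r) :
    ∀ t ∈ Icc (0:ℝ) 1,
      (∑ r, covAlong (GbarT1 Pb Γ) a γ θ t r * v t r)
        + (∑ r, θ t r * covAlong (GbarTM Pb Γ) a γ v t r)
      = deriv (fun s => ∑ r, θ s r * v s r) t := by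
  intro t ht
  have hx := hγU t ht
  have hanti := hPb.1.2 (γ t) hx
  -- key pointwise identity between the two sets of connection coefficients
  have key : ∀ p q r, GbarTM Pb Γ (γ t) p q r = - GbarT1 Pb Γ (γ t) p r q := by
    intro p q r
    simp only [GbarTM, GbarT1]
    have hsum : (∑ s, Pb (γ t) s r * Γ (γ t) q s p)
        = ∑ s, -(Pb (γ t) r s * Γ (γ t) s q p) := by
      refine Finset.sum_congr rfl fun s _ => ?_
      rw [hanti r s, hΓsym (γ t) s q p]; ring
    rw [hsum, Finset.sum_neg_distrib]
    ring
  -- product rule for the right-hand side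
  have hder : deriv (fun s => ∑ r, θ s r * v s r) t
      = ∑ r, (deriv (fun s => θ s r) t * v t r + θ t r * deriv (fun s => v s r) t) := by
    rw [deriv_fun_sum (A := fun r s => θ s r * v s r) (fun r _ => ((hθ r) t).mul ((hv r) t))]
    exact Finset.sum_congr rfl fun r _ => deriv_fun_mul ((hθ r) t) ((hv r) t)
  simp only [covAlong]
  have expand1 : ∑ r, (deriv (fun s => θ s r) t
        + ∑ p, ∑ q, a t p * θ t q * GbarT1 Pb Γ (γ t) p q r) * v t r
      = (∑ r, deriv (fun s => θ s r) t * v t r)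
        + ∑ r, (∑ p, ∑ q, a t p * θ t q * GbarT1 Pb Γ (γ t) p q r) * v t r := by
    rw [← Finset.sum_add_distrib]
    exact Finset.sum_congr rfl fun r _ => add_mul _ _ _
  have expand2 : ∑ r, θ t r * (deriv (fun s => v s r) t
        + ∑ p, ∑ q, a t p * v t q * GbarTM Pb Γ (γ t) p q r)
      = (∑ r, θ t r * deriv (fun s => v s r) t)
        + ∑ r, θ t r * ∑ p, ∑ q, a t p * v t q * GbarTM Pb Γ (γ t) p q r := by
    rw [← Finset.sum_add_distrib]
    exact Finset.sum_congr rfl fun r _ => mul_add _ _ _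
  -- the connection cross-terms cancel
  have hS2 : ∑ r, θ t r * ∑ p, ∑ q, a t p * v t q * GbarTM Pb Γ (γ t) p q r
      = - ∑ r, (∑ p, ∑ q, a t p * θ t q * GbarT1 Pb Γ (γ t) p q r) * v t r := by
    have step1 : ∀ r, θ t r * ∑ p, ∑ q, a t p * v t q * GbarTM Pb Γ (γ t) p q r
        = ∑ p, ∑ q, -(a t p * θ t r * v t q * GbarT1 Pb Γ (γ t) p r q) := by
      intro r
      rw [Finset.mul_sum]
      refine Finset.sum_congr rfl fun p _ => ?_
      rw [Finset.mul_sum]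
      refine Finset.sum_congr rfl fun q _ => ?_
      rw [key p q r]; ring
    calc ∑ r, θ t r * ∑ p, ∑ q, a t p * v t q * GbarTM Pb Γ (γ t) p q r
        = ∑ r, ∑ p, ∑ q, -(a t p * θ t r * v t q * GbarT1 Pb Γ (γ t) p r q) :=
          Finset.sum_congr rfl fun r _ => step1 r
      _ = ∑ r, ∑ p, ∑ q, -(a t p * θ t q * v t r * GbarT1 Pb Γ (γ t) p q r) :=
          sum_swap13 (fun r p q => -(a t p * θ t r * v t q * GbarT1 Pb Γ (γ t) p r q))
      _ = - ∑ r, (∑ p, ∑ q, a t p * θ t q * GbarT1 Pb Γ (γ t) p q r) * v t r := by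
          rw [← Finset.sum_neg_distrib]
          refine Finset.sum_congr rfl fun r _ => ?_
          rw [Finset.sum_mul, ← Finset.sum_neg_distrib]
          refine Finset.sum_congr rfl fun p _ => ?_
          rw [Finset.sum_mul, ← Finset.sum_neg_distrib]
          exact Finset.sum_congr rfl fun q _ => by ring
  rw [expand1, expand2, hS2, hder, Finset.sum_add_distrib]
  ring
end PoissonPaper
end
end

section
/- Let (M, π) be a Poisson manifold, V_π a Poisson spray with flow φ_t, ∇ a torsion-free classical connection on TM, and ξ ∈ T*M such that φ_t(ξ) is defined for t ∈ [0,1]; set a(t) = φ_t(ξ) with base path γ = p ∘ a. For v₀ ∈ T_ξ(T*M) let v_t = (dφ_t)(v₀) ∈ T_{a(t)}(T*M), with components v̄_t ∈ T_{γ(t)}M and θ_{v_t} ∈ T*_{γ(t)}M with respect to ∇. Then if θ is a 1-form along γ (a vertical tangent vector field along a), the projection of its Lie derivative along V_π satisfies dp(L_{V_π}(θ)) = −π♯(θ), where for a tangent vector field V along a, L_{V_π}(V)(t) = d/ds|_{s=0} (dφ_{−s})_{a(s+t)}(V(s+t)). -/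
/-!
Formalization framework for "On the existence of symplectic realizations"
(Crainic–Mărcuț).  We work on a chart: the Poisson manifold is an open set
`U ⊆ ℝⁿ` (with `Vec n := Fin n → ℝ`), its cotangent bundle is
`T*U = U × ℝⁿ ⊆ Pt n := Vec n × Vec n`, with bundle projection `Prod.fst`.
A bivector field is given by its components `Pb x p q = π_{pq}(x)`, a classical
connection on `TM` by its Christoffel symbols `Γ x p q r = Γ_{pq}^r(x)`.
-/

noncomputable section
open Set

namespace PoissonPaper

variable {n : ℕ}

section FlowAux
open Filter Topology Asymptotics
variable {E : Type*} [NormedAddCommGroup E] [NormedSpace ℝ E]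

/-- Differentiability of a flow with respect to the initial condition (forward time),
with derivative given by a solution `W` of the variational equation along the
trajectory `y`. All the analytic input is encoded in explicit hypotheses. -/
theorem hasFDerivAt_flow_forward
    (v : E → E) (Dv : E → E →L[ℝ] E) (φ : ℝ → E → E) (y : ℝ → E)
    (u L ρ η : ℝ) (hu : 0 < u) (hρ : 0 < ρ) (hη : 0 < η) (hL : 1 ≤ L)
    (hyφ : ∀ r ∈ Icc 0 u, φ r (y 0) = y r)
    (hφ : ∀ z ∈ Metric.closedBall (y 0) ρ, ∀ r ∈ Icc 0 u,
      HasDerivAt (fun τ => φ τ z) (v (φ r z)) r)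
    (hφ0 : ∀ z ∈ Metric.closedBall (y 0) ρ, φ 0 z = z)
    (hDvb : ∀ r ∈ Icc 0 u, ‖Dv (y r)‖ ≤ L)
    (hlip : ∀ r ∈ Icc 0 u, ∀ a ∈ Metric.closedBall (y r) η,
      ∀ b ∈ Metric.closedBall (y r) η, ‖v a - v b‖ ≤ L * ‖a - b‖)
    (hquad : ∀ c > (0:ℝ), ∃ δ > (0:ℝ), ∀ r ∈ Icc 0 u, ∀ a ∈ Metric.closedBall (y r) η,
      ‖a - y r‖ ≤ δ → ‖v a - v (y r) - Dv (y r) (a - y r)‖ ≤ c * ‖a - y r‖)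
    (hsmall : Real.exp (L * u) * ρ ≤ η / 2)
    (W : ℝ → E →L[ℝ] E) (hW0 : W 0 = ContinuousLinearMap.id ℝ E)
    (hWd : ∀ r ∈ Icc 0 u, HasDerivAt W ((Dv (y r)).comp (W r)) r) :
    HasFDerivAt (φ u) (W u) (y 0) := by
  set x₀ := y 0 with hx₀
  have hx₀mem : x₀ ∈ Metric.closedBall x₀ ρ := Metric.mem_closedBall_self hρ.le
  have hY : ∀ r ∈ Icc 0 u, HasDerivAt (fun τ => φ τ x₀) (v (φ r x₀)) r := hφ x₀ hx₀mem
  have hρη : ρ ≤ η / 2 := by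
    have h1 : (1:ℝ) ≤ Real.exp (L * u) := by
      rw [← Real.exp_zero]
      exact Real.exp_le_exp.2 (by positivity)
    nlinarith
  -- The fundamental Grönwall tube estimate.
  have tube : ∀ z ∈ Metric.closedBall x₀ ρ, ∀ r ∈ Icc 0 u,
      ‖φ r z - φ r x₀‖ ≤ Real.exp (L * r) * ‖z - x₀‖ := by
    intro z hz
    have hzx : ‖z - x₀‖ ≤ ρ := by
      rw [← dist_eq_norm]; exact Metric.mem_closedBall.1 hz
    have hgd : ∀ r ∈ Icc 0 u,
        HasDerivAt (fun τ => φ τ z - φ τ x₀) (v (φ r z) - v (φ r x₀)) r :=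
      fun r hr => (hφ z hz r hr).sub (hY r hr)
    have hgc : ContinuousOn (fun τ => φ τ z - φ τ x₀) (Icc 0 u) :=
      fun r hr => (hgd r hr).continuousAt.continuousWithinAt
    have hg0 : ‖φ 0 z - φ 0 x₀‖ = ‖z - x₀‖ := by rw [hφ0 z hz, hφ0 x₀ hx₀mem]
    set S : Set ℝ := {r | r ∈ Icc 0 u ∧ ∀ τ ∈ Icc 0 r, ‖φ τ z - φ τ x₀‖ ≤ η} with hS
    -- Grönwall estimate valid on `[0, m]` for any `m ∈ S`.
    have gron : ∀ m ∈ S, ∀ τ ∈ Icc 0 m, ‖φ τ z - φ τ x₀‖ ≤ Real.exp (L * τ) * ‖z - x₀‖ := by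
      intro m hm τ hτ
      have hsub : Icc 0 m ⊆ Icc 0 u := Icc_subset_Icc le_rfl hm.1.2
      have := norm_le_gronwallBound_of_norm_deriv_right_le (a := 0) (b := m)
        (hgc.mono hsub)
        (fun τ' hτ' => (hgd τ' (hsub (Ico_subset_Icc_self hτ'))).hasDerivWithinAt)
        (le_of_eq hg0)
        (fun τ' hτ' => by
          have hτ'' : τ' ∈ Icc 0 u := hsub (Ico_subset_Icc_self hτ')
          have ha : φ τ' z ∈ Metric.closedBall (y τ') η := by
            rw [Metric.mem_closedBall, dist_eq_norm, ← hyφ τ' hτ'']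
            exact hm.2 τ' (Ico_subset_Icc_self hτ')
          have hb : φ τ' x₀ ∈ Metric.closedBall (y τ') η := by
            rw [hyφ τ' hτ'']; exact Metric.mem_closedBall_self hη.le
          have := hlip τ' hτ'' _ ha _ hb
          rw [add_zero]
          exact this) τ hτ
      rwa [gronwallBound_ε0, sub_zero, mul_comm] at this
    -- `S` is all of `[0, u]`, by a continuity argument.
    have h0S : (0:ℝ) ∈ S := by
      refine ⟨left_mem_Icc.2 hu.le, fun τ hτ => ?_⟩
      have : τ = 0 := le_antisymm hτ.2 hτ.1
      subst this
      rw [hg0]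
      exact hzx.trans (hρη.trans (by linarith))
    have hbdd : BddAbove S := ⟨u, fun r hr => hr.1.2⟩
    set m := sSup S with hm
    have hmIcc : m ∈ Icc 0 u := ⟨le_csSup hbdd h0S, csSup_le ⟨0, h0S⟩ fun r hr => hr.1.2⟩
    have hmS : m ∈ S := by
      refine ⟨hmIcc, fun τ hτ => ?_⟩
      rcases lt_or_eq_of_le hτ.2 with hlt | heq
      · obtain ⟨r, hrS, hτr⟩ := exists_lt_of_lt_csSup ⟨0, h0S⟩ hlt
        exact hrS.2 τ ⟨hτ.1, hτr.le⟩
      · -- heq : τ = m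
        have h0m : (0:ℝ) ≤ m := heq ▸ hτ.1
        rcases eq_or_lt_of_le h0m with h0 | h0
        · have hτ0 : τ = 0 := by rw [heq, ← h0]
          rw [hτ0, hg0]
          exact hzx.trans (hρη.trans (by linarith))
        · -- m > 0 : limit of the bound from the left
          have hcont : ContinuousWithinAt (fun τ' => ‖φ τ' z - φ τ' x₀‖) (Ico 0 m) m :=
            ((hgd m hmIcc).continuousAt.norm).continuousWithinAt
          haveI hne : (𝓝[Ico (0:ℝ) m] m).NeBot := by
            refine mem_closure_iff_nhdsWithin_neBot.1 ?_
            rw [closure_Ico h0.ne]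
            exact right_mem_Icc.2 h0.le
          rw [heq]
          refine le_of_tendsto hcont ?_
          filter_upwards [self_mem_nhdsWithin] with τ' hτ'
          obtain ⟨r, hrS, hτr⟩ := exists_lt_of_lt_csSup ⟨0, h0S⟩ hτ'.2
          exact hrS.2 τ' ⟨hτ'.1, hτr.le⟩
    have hmu : m = u := by
      by_contra hne
      have hmu : m < u := lt_of_le_of_ne hmIcc.2 hne
      have hqm : ‖φ m z - φ m x₀‖ ≤ η / 2 := by
        have h1 := gron m hmS m (right_mem_Icc.2 hmIcc.1)
        have h2 : Real.exp (L * m) * ‖z - x₀‖ ≤ Real.exp (L * u) * ρ := by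
          have he : Real.exp (L * m) ≤ Real.exp (L * u) := by
            apply Real.exp_le_exp.2
            have hL0 : (0:ℝ) ≤ L := by linarith
            exact mul_le_mul_of_nonneg_left hmIcc.2 hL0
          have : (0:ℝ) ≤ Real.exp (L * m) := (Real.exp_pos _).le
          nlinarith [norm_nonneg (z - x₀), Real.exp_pos (L * u)]
        linarith
      have hcont : ContinuousAt (fun τ' => ‖φ τ' z - φ τ' x₀‖) m :=
        (hgd m hmIcc).continuousAt.norm
      have hev : ∀ᶠ τ' in 𝓝 m, ‖φ τ' z - φ τ' x₀‖ < η :=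
        hcont.eventually_lt_const (lt_of_le_of_lt hqm (by linarith))
      obtain ⟨δ, hδ, hball⟩ := Metric.eventually_nhds_iff.1 hev
      set m' := min u (m + δ / 2) with hm'
      have hmm' : m < m' := lt_min hmu (by linarith)
      have hm'S : m' ∈ S := by
        refine ⟨⟨hmIcc.1.trans hmm'.le, min_le_left _ _⟩, fun τ hτ => ?_⟩
        rcases le_or_gt τ m with h | h
        · exact hmS.2 τ ⟨hτ.1, h⟩
        · refine (hball ?_).le
          rw [Real.dist_eq, abs_lt]
          constructor
          · linarith
          · have : τ ≤ m + δ / 2 := hτ.2.trans (min_le_right _ _)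
            linarith
      exact absurd (le_csSup hbdd hm'S) (not_le.2 hmm')
    intro r hr
    exact gron u (hmu ▸ hmS) r hr
  -- tube membership
  have tubemem : ∀ z ∈ Metric.closedBall x₀ ρ, ∀ r ∈ Icc 0 u,
      φ r z ∈ Metric.closedBall (y r) η := by
    intro z hz r hr
    have h1 := tube z hz r hr
    have hzx : ‖z - x₀‖ ≤ ρ := by rw [← dist_eq_norm]; exact Metric.mem_closedBall.1 hz
    have he : Real.exp (L * r) ≤ Real.exp (L * u) := by
      apply Real.exp_le_exp.2
      exact mul_le_mul_of_nonneg_left hr.2 (by linarith)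
    rw [Metric.mem_closedBall, dist_eq_norm, ← hyφ r hr]
    have : Real.exp (L * r) * ‖z - x₀‖ ≤ Real.exp (L * u) * ρ := by
      nlinarith [norm_nonneg (z - x₀), Real.exp_pos (L * r), Real.exp_pos (L * u)]
    linarith
  -- now the little-o estimate
  rw [hasFDerivAt_iff_isLittleO_nhds_zero, isLittleO_iff]
  intro c hc
  have hc₀ : (0:ℝ) < c * Real.exp (-(2 * L * u)) := by positivity
  obtain ⟨δ, hδ, hq⟩ := hquad _ hc₀
  set ρ' := min ρ (δ * Real.exp (-(L * u))) with hρ'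
  have hρ'pos : 0 < ρ' := lt_min hρ (by positivity)
  filter_upwards [Metric.closedBall_mem_nhds (0:E) hρ'pos] with h hh
  have hh' : ‖h‖ ≤ ρ' := by rw [← dist_zero_right h] ; exact Metric.mem_closedBall.1 hh
  set z := x₀ + h with hzdef
  have hz : z ∈ Metric.closedBall x₀ ρ := by
    rw [Metric.mem_closedBall, dist_eq_norm, add_sub_cancel_left]
    exact hh'.trans (min_le_left _ _)
  have hzx : z - x₀ = h := add_sub_cancel_left x₀ h
  set e : ℝ → E := fun r => φ r z - φ r x₀ - W r h with he
  have he0 : e 0 = 0 := by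
    simp only [he, hφ0 z hz, hφ0 x₀ hx₀mem, hW0, ContinuousLinearMap.id_apply, hzdef, hφ0 (x₀ + h) hz]
    abel
  have hed : ∀ r ∈ Icc 0 u,
      HasDerivAt e (v (φ r z) - v (φ r x₀) - ((Dv (y r)).comp (W r)) h) r := by
    intro r hr
    have h1 : HasDerivAt (fun r => W r h) (((Dv (y r)).comp (W r)) h) r := by
      have := (hWd r hr).clm_apply (hasDerivAt_const r h)
      simpa using this
    exact ((hφ z hz r hr).sub (hY r hr)).sub h1
  have hec : ContinuousOn e (Icc 0 u) :=
    fun r hr => (hed r hr).continuousAt.continuousWithinAt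
  have hbound : ∀ r ∈ Icc 0 u,
      ‖v (φ r z) - v (φ r x₀) - ((Dv (y r)).comp (W r)) h‖
        ≤ L * ‖e r‖ + c * Real.exp (-(2 * L * u)) * (Real.exp (L * u) * ‖h‖) := by
    intro r hr
    have hyr : φ r x₀ = y r := hyφ r hr
    have hgr : ‖φ r z - y r‖ ≤ Real.exp (L * u) * ‖h‖ := by
      have h1 := tube z hz r hr
      rw [hzx] at h1
      rw [← hyr]
      refine h1.trans ?_
      have : Real.exp (L * r) ≤ Real.exp (L * u) :=
        Real.exp_le_exp.2 (mul_le_mul_of_nonneg_left hr.2 (by linarith))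
      nlinarith [norm_nonneg h]
    have hmem : φ r z ∈ Metric.closedBall (y r) η := tubemem z hz r hr
    have hsm : ‖φ r z - y r‖ ≤ δ := by
      refine hgr.trans ?_
      have h2 : ‖h‖ ≤ δ * Real.exp (-(L * u)) := hh'.trans (min_le_right _ _)
      have h3 : Real.exp (L * u) * ‖h‖ ≤ Real.exp (L * u) * (δ * Real.exp (-(L * u))) :=
        mul_le_mul_of_nonneg_left h2 (Real.exp_pos _).le
      refine h3.trans (le_of_eq ?_)
      rw [← mul_assoc, mul_comm (Real.exp (L * u)) δ, mul_assoc, ← Real.exp_add]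
      simp
    have hquadr := hq r hr _ hmem hsm
    -- rewrite the derivative
    have hrw : v (φ r z) - v (φ r x₀) - ((Dv (y r)).comp (W r)) h
        = (v (φ r z) - v (y r) - (Dv (y r)) (φ r z - y r)) + (Dv (y r)) (e r) := by
      rw [hyr]
      simp only [he, hyr, map_sub, ContinuousLinearMap.comp_apply]
      abel
    rw [hrw]
    have h4 : ‖(Dv (y r)) (e r)‖ ≤ L * ‖e r‖ := by
      calc ‖(Dv (y r)) (e r)‖ ≤ ‖Dv (y r)‖ * ‖e r‖ := (Dv (y r)).le_opNorm _
      _ ≤ L * ‖e r‖ := mul_le_mul_of_nonneg_right (hDvb r hr) (norm_nonneg _)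
    have h5 : ‖v (φ r z) - v (y r) - (Dv (y r)) (φ r z - y r)‖
        ≤ c * Real.exp (-(2 * L * u)) * (Real.exp (L * u) * ‖h‖) := by
      refine hquadr.trans ?_
      exact mul_le_mul_of_nonneg_left hgr hc₀.le
    calc ‖_ + _‖ ≤ _ := norm_add_le _ _
    _ ≤ L * ‖e r‖ + c * Real.exp (-(2 * L * u)) * (Real.exp (L * u) * ‖h‖) := by
        rw [add_comm]
        exact add_le_add h4 h5
  have hgron := norm_le_gronwallBound_of_norm_deriv_right_le (a := 0) (b := u)
    hec (fun r hr => (hed r (Ico_subset_Icc_self hr)).hasDerivWithinAt)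
    (le_of_eq (by rw [he0, norm_zero]))
    (fun r hr => hbound r (Ico_subset_Icc_self hr)) u (right_mem_Icc.2 hu.le)
  have hL0 : (0:ℝ) < L := by linarith
  have hX1 : (1:ℝ) ≤ Real.exp (L * u) := by
    rw [← Real.exp_zero]; exact Real.exp_le_exp.2 (by positivity)
  have hA : (0:ℝ) < Real.exp (-(2 * L * u)) := Real.exp_pos _
  have hAX : Real.exp (-(2 * L * u)) * (Real.exp (L * u) * Real.exp (L * u)) = 1 := by
    rw [← Real.exp_add, ← Real.exp_add, show -(2 * L * u) + (L * u + L * u) = 0 by ring,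
      Real.exp_zero]
  have hgb : gronwallBound 0 L (c * Real.exp (-(2 * L * u)) * (Real.exp (L * u) * ‖h‖)) (u - 0)
      ≤ c * ‖h‖ := by
    rw [gronwallBound_of_K_ne_0 hL0.ne']
    simp only [sub_zero, zero_mul, zero_add]
    have hnn : (0:ℝ) ≤ c * Real.exp (-(2 * L * u)) * (Real.exp (L * u) * ‖h‖) := by positivity
    have h2 : Real.exp (L * u) - 1 ≤ Real.exp (L * u) * L := by nlinarith
    have h1 : c * Real.exp (-(2 * L * u)) * (Real.exp (L * u) * ‖h‖) / L * (Real.exp (L * u) - 1)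
        ≤ c * Real.exp (-(2 * L * u)) * (Real.exp (L * u) * ‖h‖) * Real.exp (L * u) := by
      rw [div_mul_eq_mul_div, div_le_iff₀ hL0]
      calc c * Real.exp (-(2 * L * u)) * (Real.exp (L * u) * ‖h‖) * (Real.exp (L * u) - 1)
          ≤ c * Real.exp (-(2 * L * u)) * (Real.exp (L * u) * ‖h‖) * (Real.exp (L * u) * L) :=
            mul_le_mul_of_nonneg_left h2 hnn
      _ = c * Real.exp (-(2 * L * u)) * (Real.exp (L * u) * ‖h‖) * Real.exp (L * u) * L := by
            ring
    refine h1.trans (le_of_eq ?_)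
    calc c * Real.exp (-(2 * L * u)) * (Real.exp (L * u) * ‖h‖) * Real.exp (L * u)
        = c * ‖h‖ * (Real.exp (-(2 * L * u)) * (Real.exp (L * u) * Real.exp (L * u))) := by ring
    _ = c * ‖h‖ := by rw [hAX, mul_one]
  exact hgron.trans hgb

set_option maxHeartbeats 1000000 in
set_option synthInstance.maxHeartbeats 200000 in
/-- Key lemma: the derivative at `s = 0` of `s ↦ (dφ_{-s})_{φ_s(x)}(w s)`. -/
theorem flow_deriv_key {E : Type*} [NormedAddCommGroup E] [NormedSpace ℝ E]
    [ProperSpace E] [CompleteSpace E]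
    (v : E → E) (Ω : Set E) (hΩ : IsOpen Ω) (hv : ContDiffOn ℝ (⊤ : ℕ∞) v Ω)
    (φ : ℝ → E → E) (D : Set (ℝ × E)) (hD : IsOpen D)
    (hderiv : ∀ r z, (r, z) ∈ D → HasDerivAt (fun τ => φ τ z) (v (φ r z)) r)
    (hmemΩ : ∀ r z, (r, z) ∈ D → φ r z ∈ Ω)
    (hinit : ∀ z, φ 0 z = z)
    (hgroup : ∀ s r z, (r, z) ∈ D → (s, φ r z) ∈ D → φ s (φ r z) = φ (s + r) z)
    (hmem0 : ∀ r z, (r, z) ∈ D → (0, φ r z) ∈ D)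
    (x : E) (hx : (0, x) ∈ D)
    (w : ℝ → E) (w' : E) (hw : HasDerivAt w w' 0) :
    HasDerivAt (fun s => fderiv ℝ (φ (-s)) (φ s x) (w s)) (w' - fderiv ℝ v x (w 0)) 0 := by
  have hxΩ : x ∈ Ω := by have h := hmemΩ 0 x hx; rwa [hinit] at h
  -- a time interval on which the trajectory of `x` exists
  obtain ⟨ε₀, hε₀, hball₀⟩ := Metric.isOpen_iff.1 hD (0, x) hx
  set ε₁ := ε₀ / 2 with hε₁def
  have hε₁ : 0 < ε₁ := by positivity
  have hxD : ∀ r : ℝ, |r| ≤ ε₁ → (r, x) ∈ D := by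
    intro r hr
    apply hball₀
    rw [Metric.mem_ball, Prod.dist_eq, dist_self, Real.dist_eq, sub_zero]
    have : |r| < ε₀ := lt_of_le_of_lt hr (by simp [hε₁def]; linarith)
    simp [this, hε₀]
  set Y : ℝ → E := fun r => φ r x with hYdef
  have hYd : ∀ r : ℝ, |r| ≤ ε₁ → HasDerivAt Y (v (Y r)) r := fun r hr => hderiv r x (hxD r hr)
  have hYc : ContinuousOn Y (Icc (-ε₁) ε₁) := fun r hr =>
    (hYd r (abs_le.2 hr)).continuousAt.continuousWithinAt
  have hY0 : Y 0 = x := hinit x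
  -- the compact trajectory piece and a thickening inside `Ω`
  set C : Set E := Y '' Icc (-ε₁) ε₁ with hCdef
  have hCcomp : IsCompact C := isCompact_Icc.image_of_continuousOn hYc
  have hCΩ : C ⊆ Ω := by rintro - ⟨r, hr, rfl⟩; exact hmemΩ r x (hxD r (abs_le.2 hr))
  obtain ⟨η, hη, hKΩ'⟩ := hCcomp.exists_cthickening_subset_open hΩ hCΩ
  set K : Set E := Metric.cthickening η C with hKdef
  have hKΩ : K ⊆ Ω := hKΩ'
  have hKcomp : IsCompact K := hCcomp.cthickening
  have hCK : C ⊆ K := Metric.self_subset_cthickening C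
  have hballK : ∀ b ∈ C, Metric.closedBall b η ⊆ K := fun b hb z hz =>
    Metric.mem_cthickening_of_dist_le z b η C hb (Metric.mem_closedBall.1 hz)
  -- derivative bounds
  have hdiff : DifferentiableOn ℝ v Ω := hv.differentiableOn (by norm_num)
  set Dv : E → E →L[ℝ] E := fderiv ℝ v with hDvdef
  have hDvc : ContinuousOn Dv Ω := hv.continuousOn_fderiv_of_isOpen hΩ (by norm_num)
  obtain ⟨L₀, hL₀⟩ := hKcomp.exists_bound_of_continuousOn (hDvc.mono hKΩ)
  set L := max L₀ 1 with hLdef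
  have hL1 : (1:ℝ) ≤ L := le_max_right _ _
  have hLb : ∀ z ∈ K, ‖Dv z‖ ≤ L := fun z hz => (hL₀ z hz).trans (le_max_left _ _)
  have hL0 : (0:ℝ) < L := by linarith
  have hvK : ∀ z ∈ K, HasFDerivAt v (Dv z) z := fun z hz =>
    (hdiff.differentiableAt (hΩ.mem_nhds (hKΩ hz))).hasFDerivAt
  -- Lipschitz estimate on balls around points of `C`
  have hlipC : ∀ b ∈ C, ∀ a₁ ∈ Metric.closedBall b η, ∀ a₂ ∈ Metric.closedBall b η,
      ‖v a₁ - v a₂‖ ≤ L * ‖a₁ - a₂‖ := by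
    intro b hb a₁ h₁ a₂ h₂
    exact (convex_closedBall b η).norm_image_sub_le_of_norm_hasFDerivWithin_le
      (fun z hz => (hvK z (hballK b hb hz)).hasFDerivWithinAt)
      (fun z hz => hLb z (hballK b hb hz)) h₂ h₁
  -- uniform quadratic estimate around points of `C`
  have hquadC : ∀ c > (0:ℝ), ∃ δ > (0:ℝ), ∀ b ∈ C, ∀ a ∈ Metric.closedBall b η,
      ‖a - b‖ ≤ δ → ‖v a - v b - Dv b (a - b)‖ ≤ c * ‖a - b‖ := by
    intro c hc
    have hu : UniformContinuousOn Dv K :=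
      hKcomp.uniformContinuousOn_of_continuous (hDvc.mono hKΩ)
    obtain ⟨δ, hδ, hd⟩ := Metric.uniformContinuousOn_iff.1 hu c hc
    refine ⟨min (δ/2) η, lt_min (by linarith) hη, ?_⟩
    intro b hb a ha hsm
    have haball : a ∈ Metric.closedBall b (min (δ/2) η) := by
      rw [Metric.mem_closedBall, dist_eq_norm]; exact hsm
    have hbball : b ∈ Metric.closedBall b (min (δ/2) η) :=
      Metric.mem_closedBall_self (le_min (by linarith) hη.le)
    have hsK : Metric.closedBall b (min (δ/2) η) ⊆ K :=
      (Metric.closedBall_subset_closedBall (min_le_right _ _)).trans (hballK b hb)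
    have key : ∀ z ∈ Metric.closedBall b (min (δ/2) η), ‖Dv z - Dv b‖ ≤ c := by
      intro z hz
      have h1 : dist z b < δ := by
        have := Metric.mem_closedBall.1 hz
        have h2 : dist z b ≤ δ/2 := this.trans (min_le_left _ _)
        linarith
      have := hd z (hsK hz) b (hballK b hb (Metric.mem_closedBall_self hη.le)) h1
      rw [dist_eq_norm] at this
      exact this.le
    have hg : ∀ z ∈ Metric.closedBall b (min (δ/2) η),
        HasFDerivWithinAt (fun z => v z - Dv b z) (Dv z - Dv b)
          (Metric.closedBall b (min (δ/2) η)) z :=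
      fun z hz => ((hvK z (hsK hz)).sub ((Dv b).hasFDerivAt)).hasFDerivWithinAt
    have hmvt := (convex_closedBall b (min (δ/2) η)).norm_image_sub_le_of_norm_hasFDerivWithin_le
      hg key hbball haball
    have heq : v a - Dv b a - (v b - Dv b b) = v a - v b - Dv b (a - b) := by
      rw [map_sub]; abel
    rwa [heq] at hmvt
  -- uniform membership in `D` of a tube around `{0} × C`
  have hAD : ({(0:ℝ)} : Set ℝ) ×ˢ C ⊆ D := by
    rintro ⟨r0, z⟩ ⟨hr0, hz⟩
    rcases hz with ⟨r, hr, rfl⟩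
    rcases hr0 with rfl
    exact hmem0 r x (hxD r (abs_le.2 hr))
  obtain ⟨δD, hδD, hth⟩ := (isCompact_singleton.prod hCcomp).exists_thickening_subset_open hD hAD
  have htubeD : ∀ s₀ : ℝ, |s₀| ≤ ε₁ → ∀ z, dist z (Y s₀) ≤ δD/2 →
      ∀ r : ℝ, |r| ≤ δD/2 → (r, z) ∈ D := by
    intro s₀ hs₀ z hz r hr
    apply hth
    rw [Metric.mem_thickening_iff]
    refine ⟨(0, Y s₀), ⟨rfl, ⟨s₀, abs_le.1 hs₀, rfl⟩⟩, ?_⟩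
    rw [Prod.dist_eq]
    have h1 : dist r (0:ℝ) < δD := by rw [Real.dist_eq, sub_zero]; linarith
    have h2 : dist z (Y s₀) < δD := by linarith
    exact max_lt h1 h2
  -- the variational linear ODE, solved by Picard–Lindelöf
  set G : ℝ → E →L[ℝ] E := fun r => Dv (Y r) with hGdef
  have hGc : ContinuousOn G (Icc (-ε₁) ε₁) :=
    hDvc.comp hYc fun r hr => hCΩ ⟨r, hr, rfl⟩
  have hGb : ∀ r ∈ Icc (-ε₁) ε₁, ‖G r‖ ≤ L := fun r hr => hLb _ (hCK ⟨r, hr, rfl⟩)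
  set ε₃ := min ε₁ (1/(2*L)) with hε₃def
  have hε₃ : 0 < ε₃ := lt_min hε₁ (by positivity)
  have hε₃₁ : ε₃ ≤ ε₁ := min_le_left _ _
  have hIccsub : Icc (-ε₃) ε₃ ⊆ Icc (-ε₁) ε₁ := Icc_subset_Icc (by linarith) hε₃₁
  have hpl : IsPicardLindelof (fun r (Q : E →L[ℝ] E) => (G r).comp Q)
      (tmin := -ε₃) (tmax := ε₃) ⟨0, ⟨by linarith, by linarith⟩⟩ 1 1 0 (2*L).toNNReal
      L.toNNReal := by
    constructor
    · intro r hr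
      apply LipschitzWith.lipschitzOnWith
      apply LipschitzWith.of_dist_le_mul
      intro Q₁ Q₂
      rw [dist_eq_norm, dist_eq_norm, ← ContinuousLinearMap.comp_sub]
      calc ‖(G r).comp (Q₁ - Q₂)‖ ≤ ‖G r‖ * ‖Q₁ - Q₂‖ := ContinuousLinearMap.opNorm_comp_le _ _
      _ ≤ L * ‖Q₁ - Q₂‖ :=
          mul_le_mul_of_nonneg_right (hGb r (hIccsub hr)) (norm_nonneg _)
      _ = (L.toNNReal : ℝ) * ‖Q₁ - Q₂‖ := by rw [Real.coe_toNNReal _ hL0.le]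
    · intro Q hQ
      exact (hGc.mono hIccsub).clm_comp continuousOn_const
    · intro r hr Q hQ
      have h2 : ‖Q - 1‖ ≤ 1 := by
        rw [← dist_eq_norm]; exact Metric.mem_closedBall.1 hQ
      have h1 : ‖Q‖ ≤ 2 := by
        calc ‖Q‖ = ‖Q - 1 + 1‖ := by rw [sub_add_cancel]
        _ ≤ ‖Q - 1‖ + ‖(1 : E →L[ℝ] E)‖ := norm_add_le _ _
        _ ≤ 1 + 1 := add_le_add h2 (by
            rw [ContinuousLinearMap.one_def]; exact ContinuousLinearMap.norm_id_le)
        _ = 2 := by norm_num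
      calc ‖(G r).comp Q‖ ≤ ‖G r‖ * ‖Q‖ := ContinuousLinearMap.opNorm_comp_le _ _
      _ ≤ L * 2 := mul_le_mul (hGb r (hIccsub hr)) h1 (norm_nonneg _) hL0.le
      _ = ((2 * L).toNNReal : ℝ) := by rw [Real.coe_toNNReal _ (by positivity)]; ring
    · rw [Real.coe_toNNReal _ (by positivity)]
      simp only [NNReal.coe_one, NNReal.coe_zero, sub_zero, zero_sub, neg_neg, max_self]
      calc 2 * L * ε₃ ≤ 2 * L * (1/(2*L)) :=
        mul_le_mul_of_nonneg_left (min_le_right _ _) (by positivity)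
      _ = 1 := by field_simp
  obtain ⟨P, hP0', hPdIcc⟩ := hpl.exists_eq_forall_mem_Icc_hasDerivWithinAt₀
  have hP0 : P 0 = 1 := hP0'
  have hPd : ∀ r ∈ Ioo (-ε₃) ε₃, HasDerivAt P ((G r).comp (P r)) r := fun r hr =>
    (hPdIcc r (Ioo_subset_Icc_self hr)).hasDerivAt (Icc_mem_nhds hr.1 hr.2)
  have hPcont : ContinuousAt P 0 := (hPd 0 ⟨neg_lt_zero.2 hε₃, hε₃⟩).continuousAt
  have hPev : ∀ᶠ s in 𝓝 (0:ℝ), P s ∈ Metric.ball (1 : E →L[ℝ] E) (1/2) := by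
    apply hPcont.eventually_mem
    rw [hP0]
    exact Metric.ball_mem_nhds _ (by norm_num)
  obtain ⟨ε₅, hε₅, hP5⟩ := Metric.eventually_nhds_iff.1 hPev
  set A : ℝ → E →L[ℝ] E := fun s => Ring.inverse (P s) with hAdef
  have hPnorm : ∀ s : ℝ, |s| < ε₅ → ‖1 - P s‖ < 1 := by
    intro s hs
    have h0 := hP5 (y := s) (by rwa [Real.dist_eq, sub_zero])
    rw [Metric.mem_ball, dist_eq_norm] at h0
    calc ‖1 - P s‖ = ‖P s - 1‖ := norm_sub_rev _ _
    _ < 1 := by linarith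
  have hunit : ∀ s : ℝ, |s| < ε₅ → IsUnit (P s) :=
    fun s hs => ⟨Units.oneSub (1 - P s) (hPnorm s hs), sub_sub_cancel 1 (P s)⟩
  have hPA : ∀ s : ℝ, |s| < ε₅ → (P s).comp (A s) = ContinuousLinearMap.id ℝ E := by
    intro s hs
    rw [← ContinuousLinearMap.mul_def, hAdef]
    rw [Ring.mul_inverse_cancel _ (hunit s hs), ContinuousLinearMap.one_def]
  -- small constants
  set ε₂ := min ε₁ (δD/2) with hε₂def
  have hε₂ : 0 < ε₂ := lt_min hε₁ (by linarith)
  set ρ' := min (δD/2) ((η/2) * Real.exp (-(L*1))) with hρ'def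
  have hρ' : 0 < ρ' := lt_min (by linarith) (by positivity)
  have hρ'D : ρ' ≤ δD/2 := min_le_left _ _
  set ε₆ := min (min ε₂ (ε₃/2)) (min (ε₅/2) 1) with hε₆def
  have hε₆ : 0 < ε₆ := lt_min (lt_min hε₂ (by linarith)) (lt_min (by linarith) one_pos)
  have hε₆₂ : ε₆ ≤ ε₂ := (min_le_left _ _).trans (min_le_left _ _)
  have hε₆₃ : ε₆ ≤ ε₃/2 := (min_le_left _ _).trans (min_le_right _ _)
  have hε₆₅ : ε₆ ≤ ε₅/2 := (min_le_right _ _).trans (min_le_left _ _)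
  have hε₆1 : ε₆ ≤ 1 := (min_le_right _ _).trans (min_le_right _ _)
  have hε₂1 : ε₂ ≤ ε₁ := min_le_left _ _
  have hε₂D : ε₂ ≤ δD/2 := min_le_right _ _
  have hsmall' : ∀ u : ℝ, 0 < u → u ≤ 1 → Real.exp (L * u) * ρ' ≤ η / 2 := by
    intro u hu hu1
    have h1 : Real.exp (L * u) ≤ Real.exp (L * 1) :=
      Real.exp_le_exp.2 (mul_le_mul_of_nonneg_left hu1 hL0.le)
    have h2 : ρ' ≤ (η/2) * Real.exp (-(L*1)) := min_le_right _ _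
    calc Real.exp (L*u) * ρ' ≤ Real.exp (L*1) * ((η/2) * Real.exp (-(L*1))) :=
        mul_le_mul h1 h2 hρ'.le (Real.exp_pos _).le
    _ = η/2 * (Real.exp (L*1) * Real.exp (-(L*1))) := by ring
    _ = η/2 := by rw [← Real.exp_add, add_neg_cancel, Real.exp_zero, mul_one]
  -- the main differentiability statement
  have main : ∀ s : ℝ, |s| ≤ ε₆ → HasFDerivAt (φ (-s)) (A s) (Y s) := by
    intro s hs
    have hsε₁ : |s| ≤ ε₁ := hs.trans (hε₆₂.trans hε₂1)
    have hsε₅ : |s| < ε₅ := lt_of_le_of_lt (hs.trans hε₆₅) (by linarith)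
    have hsD : (s, x) ∈ D := hxD s hsε₁
    have hsδD : |s| ≤ δD/2 := hs.trans (hε₆₂.trans hε₂D)
    rcases lt_trichotomy s 0 with hneg | hzero | hpos
    · -- s < 0 : forward flow over time -s
      have hu : 0 < -s := by linarith
      have habs : |s| = -s := abs_of_neg hneg
      have hrr : ∀ r ∈ Icc (0:ℝ) (-s), |r| ≤ δD/2 := by
        intro r hr
        rw [abs_of_nonneg hr.1]
        calc r ≤ -s := hr.2
        _ = |s| := habs.symm
        _ ≤ δD/2 := hsδD
      have hIccmem : ∀ r ∈ Icc (0:ℝ) (-s), s + r ∈ Icc (-ε₁) ε₁ := by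
        intro r hr
        have h1 := abs_le.1 hsε₁
        exact ⟨by linarith [hr.1], by linarith [hr.2]⟩
      have hCmem : ∀ r ∈ Icc (0:ℝ) (-s), Y (s + r) ∈ C :=
        fun r hr => ⟨s + r, hIccmem r hr, rfl⟩
      have happ := hasFDerivAt_flow_forward v Dv φ (fun r => Y (s + r)) (-s) L ρ' η
        hu hρ' hη hL1
        (by -- hyφ
          intro r hr
          simp only [add_zero]
          have h1 : (r, φ s x) ∈ D :=
            htubeD s hsε₁ (φ s x) (by rw [dist_self]; linarith) r (hrr r hr)
          have h2 := hgroup r s x hsD h1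
          show φ r (φ s x) = φ (s + r) x
          rw [h2, add_comm])
        (by -- hφ
          intro z hz r hr
          simp only [add_zero] at hz
          exact hderiv r z (htubeD s hsε₁ z
            ((Metric.mem_closedBall.1 hz).trans hρ'D) r (hrr r hr)))
        (fun z _ => hinit z)
        (fun r hr => hLb _ (hCK (hCmem r hr)))
        (fun r hr => hlipC _ (hCmem r hr))
        (by -- hquad
          intro c hc
          obtain ⟨δq, hδq, hq⟩ := hquadC c hc
          exact ⟨δq, hδq, fun r hr a ha hd => hq _ (hCmem r hr) a ha hd⟩)
        (hsmall' (-s) hu (by rw [← habs]; exact hs.trans hε₆1))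
        (fun r => (P (s + r)).comp (A s))
        (by -- hW0
          show (P (s + 0)).comp (A s) = ContinuousLinearMap.id ℝ E
          rw [add_zero]; exact hPA s hsε₅)
        (by -- hWd
          intro r hr
          have habs2 : |s + r| ≤ ε₆ := by
            rw [abs_le]; rw [habs] at hs
            constructor <;> [linarith [hr.1]; linarith [hr.2]]
          have hmemIoo : s + r ∈ Ioo (-ε₃) ε₃ := by
            have := abs_le.1 habs2
            exact ⟨by linarith, by linarith⟩
          have h2 := hPd (s + r) hmemIoo
          have h3 : HasDerivAt (fun τ : ℝ => s + τ) 1 r := by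
            simpa using (hasDerivAt_id r).const_add s
          have h1 := HasDerivAt.scomp r h2 h3
          rw [one_smul] at h1
          have h4 := ((ContinuousLinearMap.compL ℝ E E E).flip (A s)).hasFDerivAt.comp_hasDerivAt r h1
          simp only [ContinuousLinearMap.flip_apply, ContinuousLinearMap.compL_apply,
            ContinuousLinearMap.comp_assoc] at h4
          exact h4)
      simp only [add_zero, add_neg_cancel, hP0, ContinuousLinearMap.one_def,
        ContinuousLinearMap.id_comp] at happ
      exact happ
    · -- s = 0
      subst hzero
      have hA0 : A 0 = ContinuousLinearMap.id ℝ E := by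
        show Ring.inverse (P 0) = _
        rw [hP0, Ring.inverse_one, ContinuousLinearMap.one_def]
      have h1 : HasFDerivAt (φ 0) (ContinuousLinearMap.id ℝ E) x := by
        have h2 : φ 0 = id := funext hinit
        rw [h2]; exact hasFDerivAt_id x
      rw [neg_zero, hA0]
      show HasFDerivAt (φ 0) (ContinuousLinearMap.id ℝ E) (φ 0 x)
      rwa [hinit x]
    · -- s > 0 : reversed flow over time s
      have habs : |s| = s := abs_of_pos hpos
      have hrr : ∀ r ∈ Icc (0:ℝ) s, |(-r)| ≤ δD/2 := by
        intro r hr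
        rw [abs_neg, abs_of_nonneg hr.1]
        calc r ≤ s := hr.2
        _ = |s| := habs.symm
        _ ≤ δD/2 := hsδD
      have hIccmem : ∀ r ∈ Icc (0:ℝ) s, s - r ∈ Icc (-ε₁) ε₁ := by
        intro r hr
        have h1 := abs_le.1 hsε₁
        exact ⟨by linarith [hr.2], by linarith [hr.1]⟩
      have hCmem : ∀ r ∈ Icc (0:ℝ) s, Y (s - r) ∈ C :=
        fun r hr => ⟨s - r, hIccmem r hr, rfl⟩
      have happ := hasFDerivAt_flow_forward (fun z => -(v z)) (fun z => -(Dv z))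
        (fun r z => φ (-r) z) (fun r => Y (s - r)) s L ρ' η
        hpos hρ' hη hL1
        (by -- hyφ
          intro r hr
          simp only [sub_zero]
          have h1 : ((-r), φ s x) ∈ D :=
            htubeD s hsε₁ (φ s x) (by rw [dist_self]; linarith) (-r) (hrr r hr)
          have h2 := hgroup (-r) s x hsD h1
          show φ (-r) (φ s x) = φ (s - r) x
          rw [h2, show -r + s = s - r by ring])
        (by -- hφ
          intro z hz r hr
          simp only [sub_zero] at hz
          have h1 : ((-r), z) ∈ D := htubeD s hsε₁ z
            ((Metric.mem_closedBall.1 hz).trans hρ'D) (-r) (hrr r hr)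
          have h2 := hderiv (-r) z h1
          have h3 : HasDerivAt (fun τ : ℝ => -τ) (-1) r := by
            exact hasDerivAt_neg r
          have h4 := HasDerivAt.scomp r h2 h3
          show HasDerivAt (fun τ => φ (-τ) z) (-(v (φ (-r) z))) r
          simpa [Function.comp_def] using h4)
        (by intro z hz; show φ (-0) z = z; rw [neg_zero]; exact hinit z)
        (by intro r hr; rw [norm_neg]; exact hLb _ (hCK (hCmem r hr)))
        (by -- hlip
          intro r hr a ha b hb
          rw [neg_sub_neg, norm_sub_rev]
          exact hlipC _ (hCmem r hr) a ha b hb)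
        (by -- hquad
          intro c hc
          obtain ⟨δq, hδq, hq⟩ := hquadC c hc
          refine ⟨δq, hδq, ?_⟩
          intro r hr a ha hd
          have h := hq _ (hCmem r hr) a ha hd
          have heq : -(v a) - -(v (Y (s - r))) - (-(Dv (Y (s - r)))) (a - Y (s - r))
              = -(v a - v (Y (s - r)) - (Dv (Y (s - r))) (a - Y (s - r))) := by
            simp only [ContinuousLinearMap.neg_apply]
            abel
          rw [heq, norm_neg]
          exact h)
        (hsmall' s hpos (by rw [← habs]; exact hs.trans hε₆1))
        (fun r => (P (s - r)).comp (A s))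
        (by -- hW0
          show (P (s - 0)).comp (A s) = ContinuousLinearMap.id ℝ E
          rw [sub_zero]; exact hPA s hsε₅)
        (by -- hWd
          intro r hr
          have habs2 : |s - r| ≤ ε₆ := by
            rw [abs_le]; rw [habs] at hs
            constructor <;> [linarith [hr.2]; linarith [hr.1]]
          have hmemIoo : s - r ∈ Ioo (-ε₃) ε₃ := by
            have := abs_le.1 habs2
            exact ⟨by linarith, by linarith⟩
          have h2 := hPd (s - r) hmemIoo
          have h3 : HasDerivAt (fun τ : ℝ => s - τ) (-1) r :=
            (hasDerivAt_id r).const_sub s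
          have h1 := HasDerivAt.scomp r h2 h3
          have h4 := ((ContinuousLinearMap.compL ℝ E E E).flip (A s)).hasFDerivAt.comp_hasDerivAt r h1
          simp only [ContinuousLinearMap.flip_apply, ContinuousLinearMap.compL_apply,
            neg_smul, one_smul, map_neg, ContinuousLinearMap.neg_comp,
            ContinuousLinearMap.comp_assoc] at h4
          show HasDerivAt (fun r => (P (s - r)).comp (A s))
            ((-(Dv (Y (s - r)))).comp ((P (s - r)).comp (A s))) r
          simp only [ContinuousLinearMap.neg_comp]
          exact h4)
      simp only [sub_zero, sub_self, hP0, ContinuousLinearMap.one_def,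
        ContinuousLinearMap.id_comp] at happ
      exact happ
  -- conclude: differentiate `s ↦ A s (w s)` at `0`
  have hfder : ∀ s : ℝ, |s| ≤ ε₆ → fderiv ℝ (φ (-s)) (φ s x) = A s :=
    fun s hs => (main s hs).fderiv
  have hAd : HasDerivAt A (-(Dv x)) 0 := by
    have h1 : HasDerivAt P (Dv x) 0 := by
      have h2 := hPd 0 ⟨neg_lt_zero.2 hε₃, hε₃⟩
      rw [hP0, ContinuousLinearMap.one_def, ContinuousLinearMap.comp_id] at h2
      have h3 : G 0 = Dv x := by rw [hGdef]; simp only [hY0]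
      rwa [h3] at h2
    have hP0u : P 0 = ((1 : (E →L[ℝ] E)ˣ) : E →L[ℝ] E) := by rw [hP0]; rfl
    have h3 : HasFDerivAt Ring.inverse
        (-(ContinuousLinearMap.mulLeftRight ℝ (E →L[ℝ] E)
          ↑(1 : (E →L[ℝ] E)ˣ)⁻¹ ↑(1 : (E →L[ℝ] E)ˣ)⁻¹)) (P 0) := by
      rw [hP0u]; exact hasFDerivAt_ringInverse 1
    have h4 := h3.comp_hasDerivAt 0 h1
    simp only [ContinuousLinearMap.neg_apply, ContinuousLinearMap.mulLeftRight_apply,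
      inv_one, Units.val_one, one_mul, mul_one] at h4
    exact h4
  have hA0 : A 0 = 1 := by
    show Ring.inverse (P 0) = 1
    rw [hP0, Ring.inverse_one]
  have hev : (fun s => fderiv ℝ (φ (-s)) (φ s x) (w s)) =ᶠ[𝓝 (0:ℝ)]
      (fun s => (A s) (w s)) := by
    filter_upwards [Metric.closedBall_mem_nhds (0:ℝ) hε₆] with s hs
    rw [hfder s (by rwa [Metric.mem_closedBall, Real.dist_eq, sub_zero] at hs)]
  have final := (hAd.clm_apply hw).congr_of_eventuallyEq hev
  convert final using 1
  rw [hA0]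
  simp only [ContinuousLinearMap.neg_apply, ContinuousLinearMap.one_apply]
  abel



end FlowAux

/-- For a vertical tangent vector field along `a(t) = φ_t(ξ)` coming from a
1-form `θ` along `γ = p ∘ a` (i.e. `V(t) = (0, θ(t))` in `T_{a(t)}(T*M)`),
the projection of its Lie derivative along the spray `V_π` is
`dp(L_{V_π}(V)) = −π♯(θ)`, where
`L_{V_π}(V)(t) = d/ds|_{s=0} (dφ_{−s})_{a(s+t)}(V(s+t))`. -/
theorem lie_derivative_of_vertical_field
    {n : ℕ} (U : Set (Vec n)) (hU : IsOpen U)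
    (Pb : Vec n → Fin n → Fin n → ℝ) (hPb : IsPoissonOn U Pb)
    (V : Pt n → Pt n) (hV : IsSpray U Pb V)
    (D : Set (ℝ × Pt n)) (φ : ℝ → Pt n → Pt n) (hφ : IsLocalFlow U V D φ)
    (Γ : Vec n → Fin n → Fin n → Fin n → ℝ)
    (hΓsym : ∀ x p q r, Γ x q p r = Γ x p q r)  -- torsion-free
    (hΓ : ∀ p q r, ContDiffOn ℝ (⊤ : ℕ∞) (fun x => Γ x p q r) U)
    (ξ : Pt n) (hξ : ∀ t ∈ Icc (0:ℝ) 1, (t, ξ) ∈ D)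
    (θ : ℝ → Vec n) (hθ : ∀ r, Differentiable ℝ fun s => θ s r)
    (t : ℝ) (ht : t ∈ Icc (0:ℝ) 1) :
    deriv (fun s =>
        (fderiv ℝ (φ (-s)) (φ (t + s) ξ) (((0 : Vec n), θ (t + s)) : Pt n)).1) 0
      = -sharp Pb ((φ t ξ).1) (θ t) := by
  classical
  have htD : (t, ξ) ∈ D := hξ t ht
  have hx1U : (φ t ξ).1 ∈ U := hφ.invariant t ξ htD
  set x : Pt n := φ t ξ with hxdef
  have hx0 : ((0:ℝ), x) ∈ D := hφ.mem_zero x hx1U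
  have hΩ : IsOpen (U ×ˢ (univ : Set (Vec n))) := hU.prod isOpen_univ
  -- the vertical vector field along the path, and its derivative at 0
  have hθD : Differentiable ℝ θ := by
    rw [differentiable_pi]; exact hθ
  have hgD : DifferentiableAt ℝ (fun s => θ (t + s)) 0 :=
    (hθD (t + 0)).comp 0 ((differentiableAt_const t).add differentiableAt_id)
  set θ' : Vec n := deriv (fun s => θ (t + s)) 0 with hθ'def
  have hgd : HasDerivAt (fun s => θ (t + s)) θ' 0 := hgD.hasDerivAt
  set w : ℝ → Pt n := fun s => ((0 : Vec n), θ (t + s)) with hwdef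
  have hw : HasDerivAt w (((0:Vec n), θ')) 0 := (hasDerivAt_const (0:ℝ) (0:Vec n)).prodMk hgd
  -- the key lemma on the flow
  have key := flow_deriv_key V (U ×ˢ (univ : Set (Vec n))) hΩ hV.smooth φ D hφ.isOpen_dom
    (fun r z h => hφ.hasDeriv r z h)
    (fun r z h => Set.mem_prod.2 ⟨hφ.invariant r z h, trivial⟩)
    hφ.init
    (fun s r z h1 h2 => (hφ.group s r z h1 h2).2)
    (fun r z h => hφ.mem_zero _ (hφ.invariant r z h))
    x hx0 w (((0:Vec n), θ')) hw
  have keyfst := (ContinuousLinearMap.fst ℝ (Vec n) (Vec n)).hasFDerivAt.comp_hasDerivAt 0 key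
  have hder : HasDerivAt (fun s => (fderiv ℝ (φ (-s)) (φ s x) (w s)).1)
      ((((0:Vec n), θ') - fderiv ℝ V x (w 0)).1) 0 := keyfst
  -- the target function agrees with ours near 0
  have hev : (fun s =>
        (fderiv ℝ (φ (-s)) (φ (t + s) ξ) (((0 : Vec n), θ (t + s)) : Pt n)).1)
      =ᶠ[nhds (0:ℝ)] (fun s => (fderiv ℝ (φ (-s)) (φ s x) (w s)).1) := by
    have hc : Continuous (fun s : ℝ => (s, x)) := continuous_id.prodMk continuous_const
    have hxev : ∀ᶠ s in nhds (0:ℝ), (s, x) ∈ D :=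
      hc.continuousAt.eventually_mem (hφ.isOpen_dom.mem_nhds hx0)
    filter_upwards [hxev] with s hsD
    have h2 : φ (t + s) ξ = φ s x := by
      rw [add_comm t s, ← (hφ.group s t ξ htD hsD).2]
    rw [h2]
  rw [Filter.EventuallyEq.deriv_eq hev, hder.deriv]
  -- compute the first component of the derivative of V in a vertical direction
  have hw0 : w 0 = ((0:Vec n), θ t) := by rw [hwdef]; simp
  have hxΩ : x ∈ U ×ˢ (univ : Set (Vec n)) := Set.mem_prod.2 ⟨hx1U, trivial⟩
  have hVdiff : DifferentiableAt ℝ V x :=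
    (hV.smooth.differentiableOn (by norm_num)).differentiableAt (hΩ.mem_nhds hxΩ)
  have hsharp : (fderiv ℝ V x (((0:Vec n), θ t) : Pt n)).1 = sharp Pb x.1 (θ t) := by
    set k : Pt n := ((0:Vec n), θ t) with hk
    have hc : ∀ τ:ℝ, HasDerivAt (fun τ : ℝ => x + τ • k) k τ := by
      intro τ
      simpa using ((hasDerivAt_id τ).smul_const k).const_add x
    have hVd' : HasFDerivAt V (fderiv ℝ V x) (x + (0:ℝ) • k) := by
      rw [zero_smul, add_zero]; exact hVdiff.hasFDerivAt
    have h1 := hVd'.comp_hasDerivAt 0 (hc 0)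
    have h2 := (ContinuousLinearMap.fst ℝ (Vec n) (Vec n)).hasFDerivAt.comp_hasDerivAt 0 h1
    have h2' : HasDerivAt (fun τ : ℝ => (V (x + τ • k)).1) ((fderiv ℝ V x k).1) 0 := h2
    have h3 : (fun τ : ℝ => (V (x + τ • k)).1)
        = fun τ : ℝ => sharp Pb x.1 x.2 + τ • sharp Pb x.1 (θ t) := by
      funext τ
      have hpt1 : (x + τ • k).1 = x.1 := by
        rw [hk]; simp
      have hbase := hV.base (x + τ • k) (by rw [hpt1]; exact hx1U)
      rw [hbase, hpt1]
      have hpt2 : (x + τ • k).2 = x.2 + τ • θ t := by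
        rw [hk]; simp
      rw [hpt2]
      funext q
      simp only [sharp, Pi.add_apply, Pi.smul_apply, smul_eq_mul]
      rw [Finset.mul_sum, ← Finset.sum_add_distrib]
      congr 1; funext p; ring
    rw [h3] at h2'
    have h4 : HasDerivAt (fun τ : ℝ => sharp Pb x.1 x.2 + τ • sharp Pb x.1 (θ t))
        (sharp Pb x.1 (θ t)) 0 := by
      simpa using ((hasDerivAt_id (0:ℝ)).smul_const (sharp Pb x.1 (θ t))).const_add
        (sharp Pb x.1 x.2)
    exact h2'.unique h4
  rw [hw0, Prod.fst_sub, hsharp]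
  exact zero_sub _

end PoissonPaper
end
end
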